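/- arXiv:1707.00829 — 4 statements merged into one kernel-verified Lean document; each statement's English description precedes it below -/
import Mathlib

section
/- Let f:[0,∞)→ℝ be a locally bounded measurable function with f(t) = O(P{ξ>t}) as t→∞, and assume P{ξ>t} ~ t^{−α} ℓ_ξ(t) as t→∞ for some α∈(0,1) and slowly varying ℓ_ξ. Then for every l∈ℕ, E[(Σ_{k≥0} |f(t−S_k)| 1{S_k ≤ t})^l] = O(1) as t→∞, i.e. the l-th moments of the renewal shot noise process with response |f| stay bounded. -/
open MeasureTheory ProbabilityTheory Filter Topology Set Asymptotics

noncomputable section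

/-- A function is slowly varying at infinity. -/
def SlowlyVarying (L : ℝ → ℝ) : Prop :=
  ∀ lam : ℝ, 0 < lam → Tendsto (fun t => L (lam * t) / L t) atTop (nhds 1)

/-- A function `b : [0,∞) → [0,∞)` is directly Riemann integrable: nonnegative,
Lebesgue-a.e. continuous, locally bounded, with summable sups over unit intervals. -/
def DirectlyRiemannIntegrable (b : ℝ → ℝ) : Prop :=
  (∀ t ≥ (0:ℝ), 0 ≤ b t) ∧
  (∀ᵐ t ∂(volume.restrict (Ici (0:ℝ))), ContinuousAt b t) ∧
  (∀ T > (0:ℝ), ∃ M : ℝ, ∀ t ∈ Icc (0:ℝ) T, b t ≤ M) ∧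
  Summable (fun n : ℕ => ⨆ y ∈ Ico (n : ℝ) ((n : ℝ) + 1), b y)

/-- A càdlàg (right-continuous with left limits) real function. -/
def Cadlag (f : ℝ → ℝ) : Prop :=
  (∀ t : ℝ, ContinuousWithinAt f (Ici t) t) ∧
  (∀ t : ℝ, ∃ L : ℝ, Tendsto f (nhdsWithin t (Iio t)) (nhds L))

/-- The zero-delayed random walk `S_k = ξ_0 + ⋯ + ξ_{k-1}`. -/
def rw {Ω : Type*} (ξ : ℕ → Ω → ℝ) (k : ℕ) (ω : Ω) : ℝ := ∑ i ∈ Finset.range k, ξ i ω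

/-- The centered random process with immigration
`Ỹ(t) = Σ_{k≥0} (X_{k+1}(t−S_k) − h(t−S_k)) 1{S_k ≤ t}`. -/
def Ytil {Ω : Type*} (X : ℕ → ℝ → Ω → ℝ) (ξ : ℕ → Ω → ℝ) (h : ℝ → ℝ) (t : ℝ) (ω : Ω) : ℝ :=
  ∑' k : ℕ, if rw ξ k ω ≤ t then X k (t - rw ξ k ω) ω - h (t - rw ξ k ω) else 0

namespace St11

open scoped ENNReal

def Sx (x : ℕ → ℝ) (k : ℕ) : ℝ := ∑ i ∈ Finset.range k, x i

def aa (G : ℝ → ℝ≥0∞) (t : ℝ) (x : ℕ → ℝ) (k : ℕ) : ℝ≥0∞ :=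
  if Sx x k ≤ t then G (t - Sx x k) else 0

def TT (G : ℝ → ℝ≥0∞) (N : ℕ) (t : ℝ) (x : ℕ → ℝ) : ℝ≥0∞ :=
  ∑ k ∈ Finset.range N, aa G t x k

def HH (G : ℝ → ℝ≥0∞) : ℕ → ℕ → ℝ → (ℕ → ℝ) → ℝ≥0∞
  | 0, _, _, _ => 1
  | (l+1), N, t, x => ∑ k ∈ Finset.range N,
      aa G t x k * HH G l (N - k) (t - Sx x k) (fun i => x (k + i))

variable {G : ℝ → ℝ≥0∞}

lemma Sx_add (x : ℕ → ℝ) (k j : ℕ) : Sx x (k + j) = Sx x k + Sx (fun i => x (k + i)) j := by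
  simp [Sx, Finset.sum_range_add]

lemma aa_shift (t : ℝ) (x : ℕ → ℝ) (k j : ℕ) :
    aa G (t - Sx x k) (fun i => x (k + i)) j = aa G t x (k + j) := by
  unfold aa
  rw [Sx_add x k j]
  have h : Sx (fun i => x (k+i)) j ≤ t - Sx x k ↔ Sx x k + Sx (fun i => x (k+i)) j ≤ t := by
    constructor <;> intro <;> linarith
  rw [if_congr h rfl rfl]
  have h2 : t - Sx x k - Sx (fun i => x (k+i)) j = t - (Sx x k + Sx (fun i => x (k+i)) j) := by
    ring
  rw [h2]

lemma TT_tail (t : ℝ) (x : ℕ → ℝ) (k N : ℕ) :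
    TT G (N - k) (t - Sx x k) (fun i => x (k + i)) = ∑ j ∈ Finset.Ico k N, aa G t x j := by
  rw [Finset.sum_Ico_eq_sum_range]
  exact Finset.sum_congr rfl fun j _ => aa_shift t x k j

lemma pow_step (m : ℕ) (a y : ℝ≥0∞) :
    (a + y) ^ (m + 1) ≤ y ^ (m + 1) + ((m : ℝ≥0∞) + 1) * a * (a + y) ^ m := by
  induction m with
  | zero => simpa [add_comm] using le_rfl
  | succ m ih =>
    have hy : y ≤ a + y := le_add_self
    have hpow : y ^ (m+1) ≤ (a + y) ^ (m+1) := pow_le_pow_left₀ zero_le hy _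
    calc (a+y)^(m+1+1) = (a+y) * (a+y)^(m+1) := by ring
      _ ≤ (a+y) * (y^(m+1) + ((m : ℝ≥0∞)+1)*a*(a+y)^m) := mul_le_mul_right ih _
      _ = y^(m+1+1) + (a*y^(m+1) + ((m : ℝ≥0∞)+1)*a*(a+y)^(m+1)) := by ring
      _ ≤ y^(m+1+1) + (a*(a+y)^(m+1) + ((m : ℝ≥0∞)+1)*a*(a+y)^(m+1)) := by
          gcongr
      _ = y^(m+1+1) + (((m+1 : ℕ) : ℝ≥0∞)+1)*a*(a+y)^(m+1) := by push_cast; ring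

lemma telescope (m : ℕ) : ∀ (N : ℕ) (a b : ℕ → ℝ≥0∞), (∀ k < N, b k = a k + b (k+1)) →
    b 0 ^ (m+1) ≤ b N ^ (m+1) + ∑ k ∈ Finset.range N, ((m : ℝ≥0∞)+1) * a k * b k ^ m := by
  intro N
  induction N with
  | zero => intro a b _; simp
  | succ N ih =>
    intro a b hb
    have h0 : b 0 = a 0 + b 1 := hb 0 (Nat.succ_pos N)
    have step : b 0 ^ (m+1) ≤ b 1 ^ (m+1) + ((m : ℝ≥0∞)+1) * a 0 * b 0 ^ m := by
      calc b 0 ^ (m+1) = (a 0 + b 1) ^ (m+1) := by rw [← h0]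
        _ ≤ b 1 ^ (m+1) + ((m : ℝ≥0∞)+1) * a 0 * (a 0 + b 1) ^ m := pow_step m (a 0) (b 1)
        _ = b 1 ^ (m+1) + ((m : ℝ≥0∞)+1) * a 0 * b 0 ^ m := by rw [← h0]
    have ihh := ih (fun k => a (k+1)) (fun k => b (k+1)) (fun k hk => hb (k+1) (by omega))
    calc b 0 ^ (m+1) ≤ b 1 ^ (m+1) + ((m : ℝ≥0∞)+1) * a 0 * b 0 ^ m := step
      _ ≤ (b (N+1) ^ (m+1) + ∑ k ∈ Finset.range N, ((m : ℝ≥0∞)+1) * a (k+1) * b (k+1) ^ m)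
            + ((m : ℝ≥0∞)+1) * a 0 * b 0 ^ m := add_le_add_left ihh _
      _ = b (N+1) ^ (m+1) + ∑ k ∈ Finset.range (N+1), ((m : ℝ≥0∞)+1) * a k * b k ^ m := by
          rw [Finset.sum_range_succ']; ring

lemma TT_pow_le : ∀ (l N : ℕ) (t : ℝ) (x : ℕ → ℝ),
    TT G N t x ^ l ≤ (l.factorial : ℝ≥0∞) * HH G l N t x := by
  intro l
  induction l with
  | zero => intro N t x; simp [HH]
  | succ l ih =>
    intro N t x
    have hb : ∀ k < N, (∑ j ∈ Finset.Ico k N, aa G t x j)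
        = aa G t x k + ∑ j ∈ Finset.Ico (k+1) N, aa G t x j :=
      fun k hk => Finset.sum_eq_sum_Ico_succ_bot hk _
    have htel := telescope l N (aa G t x) (fun k => ∑ j ∈ Finset.Ico k N, aa G t x j) hb
    have hb0 : (∑ j ∈ Finset.Ico 0 N, aa G t x j) = TT G N t x := by
      rw [← Finset.range_eq_Ico]; rfl
    rw [hb0, Finset.Ico_self, Finset.sum_empty, zero_pow (Nat.succ_ne_zero l), zero_add] at htel
    calc TT G N t x ^ (l+1)
        ≤ ∑ k ∈ Finset.range N, ((l : ℝ≥0∞)+1) * aa G t x k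
            * (∑ j ∈ Finset.Ico k N, aa G t x j) ^ l := htel
      _ ≤ ∑ k ∈ Finset.range N, ((l : ℝ≥0∞)+1) * aa G t x k *
            ((l.factorial : ℝ≥0∞) * HH G l (N-k) (t - Sx x k) (fun i => x (k+i))) := by
          refine Finset.sum_le_sum fun k hk => ?_
          have h1 : (∑ j ∈ Finset.Ico k N, aa G t x j)
              = TT G (N-k) (t - Sx x k) (fun i => x (k+i)) := (TT_tail t x k N).symm
          rw [h1]
          exact mul_le_mul_right (ih (N-k) (t - Sx x k) _) _
      _ = ((l+1).factorial : ℝ≥0∞) * HH G (l+1) N t x := by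
          show _ = _ * ∑ k ∈ Finset.range N, aa G t x k * HH G l (N-k) (t - Sx x k) fun i => x (k+i)
          rw [Finset.mul_sum]
          refine Finset.sum_congr rfl fun k _ => ?_
          rw [Nat.factorial_succ]
          push_cast
          ring

lemma HH_congr : ∀ (l N : ℕ) (t : ℝ) (x y : ℕ → ℝ), (∀ i < N, x i = y i) →
    HH G l N t x = HH G l N t y := by
  intro l
  induction l with
  | zero => intros; rfl
  | succ l ih =>
    intro N t x y h
    show (∑ k ∈ Finset.range N, aa G t x k * HH G l (N-k) (t - Sx x k) fun i => x (k+i))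
      = ∑ k ∈ Finset.range N, aa G t y k * HH G l (N-k) (t - Sx y k) fun i => y (k+i)
    refine Finset.sum_congr rfl fun k hk => ?_
    have hkN := Finset.mem_range.mp hk
    have hS : Sx x k = Sx y k :=
      Finset.sum_congr rfl fun i hi => h i (lt_trans (Finset.mem_range.mp hi) hkN)
    have h1 : aa G t x k = aa G t y k := by simp only [aa, hS]
    rw [h1, ih (N-k) (t - Sx x k) _ _ (fun i hi => h (k+i) (by omega)), hS]

lemma measurable_Sx (k : ℕ) : Measurable fun x : ℕ → ℝ => Sx x k :=
  Finset.measurable_sum _ fun i _ => measurable_pi_apply i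

lemma measurable_aa (hG : Measurable G) (k : ℕ) :
    Measurable fun p : ℝ × (ℕ → ℝ) => aa G p.1 p.2 k := by
  unfold aa
  refine Measurable.ite ?_
    (hG.comp (measurable_fst.sub ((measurable_Sx k).comp measurable_snd))) measurable_const
  exact measurableSet_le ((measurable_Sx k).comp measurable_snd) measurable_fst

lemma measurable_HH (hG : Measurable G) : ∀ l N, Measurable fun p : ℝ × (ℕ → ℝ) => HH G l N p.1 p.2 := by
  intro l
  induction l with
  | zero => intro N; exact measurable_const
  | succ l ih =>
    intro N
    show Measurable fun p : ℝ × (ℕ → ℝ) =>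
      ∑ k ∈ Finset.range N, aa G p.1 p.2 k * HH G l (N-k) (p.1 - Sx p.2 k) fun i => p.2 (k+i)
    refine Finset.measurable_sum _ fun k _ => Measurable.mul (measurable_aa hG k) ?_
    exact (ih (N-k)).comp ((measurable_fst.sub ((measurable_Sx k).comp measurable_snd)).prodMk
      (measurable_pi_lambda _ fun i => (measurable_pi_apply (k+i)).comp measurable_snd))


section Prob

variable {Ω : Type*} [MeasureSpace Ω] [IsProbabilityMeasure (ℙ : Measure Ω)]
  {ξ : ℕ → Ω → ℝ}

/-- The shifted sequence of increments. -/
def seqs (ξ : ℕ → Ω → ℝ) (k0 : ℕ) (ω : Ω) : ℕ → ℝ := fun i => ξ (k0 + i) ω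

lemma measurable_seqs (hmξ : ∀ k, Measurable (ξ k)) (k0 : ℕ) :
    Measurable (seqs ξ k0) :=
  measurable_pi_lambda _ fun i => hmξ (k0 + i)

lemma seqs_shift (k0 k : ℕ) (ω : Ω) :
    (fun i => seqs ξ k0 ω (k + i)) = seqs ξ (k0 + k) ω := by
  funext i; simp [seqs, add_assoc]

lemma indep_sum_tail (hmξ : ∀ k, Measurable (ξ k))
    (hindep : iIndepFun ξ ℙ)
    (k0 k M : ℕ) :
    IndepFun (fun ω => Sx (seqs ξ k0 ω) k) (fun ω (i : Fin M) => ξ (k0 + k + i) ω) ℙ := by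
  classical
  set S : Finset ℕ := (Finset.range k).image (fun i => k0 + i) with hSdef
  set T : Finset ℕ := (Finset.range M).image (fun i => k0 + k + i) with hTdef
  have hST : Disjoint S T := by
    rw [Finset.disjoint_left]
    rintro a ha hb
    simp only [hSdef, hTdef, Finset.mem_image, Finset.mem_range] at ha hb
    obtain ⟨i, hi, rfl⟩ := ha
    obtain ⟨j, hj, hij⟩ := hb
    omega
  have base := hindep.indepFun_finset S T hST hmξ
  set φ : ((i : S) → ℝ) → ℝ :=
    fun u => ∑ i ∈ (Finset.range k).attach,
      u ⟨k0 + i.1, by rw [hSdef]; exact Finset.mem_image_of_mem _ i.2⟩ with hφdef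
  set ψ : ((i : T) → ℝ) → (Fin M → ℝ) :=
    fun u j => u ⟨k0 + k + (j : ℕ),
      by rw [hTdef]; exact Finset.mem_image_of_mem _ (Finset.mem_range.mpr j.isLt)⟩ with hψdef
  have hφ : Measurable φ := Finset.measurable_sum _ fun i _ => measurable_pi_apply _
  have hψ : Measurable ψ := measurable_pi_lambda _ fun j => measurable_pi_apply _
  have h1 : (fun ω => Sx (seqs ξ k0 ω) k) = φ ∘ (fun ω (i : S) => ξ i ω) := by
    funext ω
    show Sx (seqs ξ k0 ω) k = ∑ i ∈ (Finset.range k).attach, ξ (k0 + i.1) ω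
    rw [Finset.sum_attach (Finset.range k) (fun i => ξ (k0 + i) ω)]
    rfl
  have h2 : (fun ω (i : Fin M) => ξ (k0 + k + i) ω) = ψ ∘ (fun ω (i : T) => ξ i ω) := rfl
  rw [h1, h2]
  exact base.comp hφ hψ

lemma indep_sum_next (hmξ : ∀ k, Measurable (ξ k))
    (hindep : iIndepFun ξ ℙ)
    (k0 k : ℕ) :
    IndepFun (fun ω => Sx (seqs ξ k0 ω) k) (ξ (k0 + k)) ℙ := by
  have h := indep_sum_tail hmξ hindep k0 k 1
  have h2 : (ξ (k0 + k)) = (fun v : Fin 1 → ℝ => v 0) ∘ (fun ω (i : Fin 1) => ξ (k0 + k + i) ω) := by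
    funext ω; simp
  rw [h2]
  exact h.comp measurable_id (measurable_pi_apply 0)

lemma measurable_SxSeq (hmξ : ∀ k, Measurable (ξ k)) (k0 k : ℕ) :
    Measurable fun ω => Sx (seqs ξ k0 ω) k :=
  (measurable_Sx k).comp (measurable_seqs hmξ k0)

/-- Splitting the expectation of a product of a function of `S_k` and a function of the
future increments. -/
lemma split_bound (hmξ : ∀ k, Measurable (ξ k))
    (hindep : iIndepFun ξ ℙ)
    (k0 k M : ℕ) (F : ℝ → ℝ≥0∞) (hF : Measurable F)
    (Ψ : ℝ → (ℕ → ℝ) → ℝ≥0∞)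
    (hΨm : Measurable fun p : ℝ × (ℕ → ℝ) => Ψ p.1 p.2)
    (hΨc : ∀ (u : ℝ) (x y : ℕ → ℝ), (∀ i < M, x i = y i) → Ψ u x = Ψ u y)
    (hΨi : ∀ s : ℝ, ∫⁻ ω, Ψ s (seqs ξ (k0 + k) ω) ∂ℙ ≤ 1) :
    ∫⁻ ω, F (Sx (seqs ξ k0 ω) k) * Ψ (Sx (seqs ξ k0 ω) k) (seqs ξ (k0 + k) ω) ∂ℙ
      ≤ ∫⁻ ω, F (Sx (seqs ξ k0 ω) k) ∂ℙ := by
  classical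
  set X : Ω → ℝ := fun ω => Sx (seqs ξ k0 ω) k with hXdef
  set Y : Ω → (Fin M → ℝ) := fun ω i => ξ (k0 + k + i) ω with hYdef
  set ext : (Fin M → ℝ) → (ℕ → ℝ) := fun v i => if h : i < M then v ⟨i, h⟩ else 0 with hextdef
  have hmX : Measurable X := measurable_SxSeq hmξ k0 k
  have hmY : Measurable Y := measurable_pi_lambda _ fun i => hmξ (k0 + k + i)
  have hmext : Measurable ext := by
    refine measurable_pi_lambda _ fun i => ?_
    by_cases h : i < M
    · simp only [hextdef, dif_pos h]; exact measurable_pi_apply _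
    · simp only [hextdef, dif_neg h]; exact measurable_const
  have hXY : IndepFun X Y ℙ := indep_sum_tail hmξ hindep k0 k M
  have hmap : Measure.map (fun ω => (X ω, Y ω)) ℙ = (Measure.map X ℙ).prod (Measure.map Y ℙ) :=
    (indepFun_iff_map_prod_eq_prod_map_map hmX.aemeasurable hmY.aemeasurable).mp hXY
  set Ψ' : ℝ × (Fin M → ℝ) → ℝ≥0∞ := fun p => F p.1 * Ψ p.1 (ext p.2) with hΨ'def
  have hmΨ' : Measurable Ψ' :=
    (hF.comp measurable_fst).mul
      (hΨm.comp (measurable_fst.prodMk (hmext.comp measurable_snd)))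
  have hext_seq : ∀ ω, ext (Y ω) =  fun i => if i < M then seqs ξ (k0 + k) ω i else 0 := by
    intro ω; funext i
    by_cases h : i < M
    · simp [hextdef, hYdef, seqs, h]
    · simp [hextdef, dif_neg h, h]
  have hpt : ∀ ω, F (X ω) * Ψ (X ω) (seqs ξ (k0 + k) ω) = Ψ' (X ω, Y ω) := by
    intro ω
    have : Ψ (X ω) (seqs ξ (k0 + k) ω) = Ψ (X ω) (ext (Y ω)) := by
      refine hΨc _ _ _ fun i hi => ?_
      rw [hext_seq ω]
      simp [hi]
    rw [hΨ'def, this]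
  haveI : IsProbabilityMeasure (Measure.map Y ℙ) := Measure.isProbabilityMeasure_map hmY.aemeasurable
  haveI : IsProbabilityMeasure (Measure.map X ℙ) := Measure.isProbabilityMeasure_map hmX.aemeasurable
  have hm2 : ∀ s : ℝ, Measurable fun v => Ψ s (ext v) := fun s =>
    hΨm.comp (measurable_const.prodMk hmext)
  calc ∫⁻ ω, F (X ω) * Ψ (X ω) (seqs ξ (k0 + k) ω) ∂ℙ
      = ∫⁻ ω, Ψ' (X ω, Y ω) ∂ℙ := lintegral_congr hpt
    _ = ∫⁻ p, Ψ' p ∂(Measure.map (fun ω => (X ω, Y ω)) ℙ) :=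
        (lintegral_map hmΨ' (hmX.prodMk hmY)).symm
    _ = ∫⁻ p, Ψ' p ∂((Measure.map X ℙ).prod (Measure.map Y ℙ)) := by rw [hmap]
    _ = ∫⁻ s, ∫⁻ v, Ψ' (s, v) ∂(Measure.map Y ℙ) ∂(Measure.map X ℙ) := lintegral_prod _ hmΨ'.aemeasurable
    _ ≤ ∫⁻ s, F s ∂(Measure.map X ℙ) := by
        refine lintegral_mono fun s => ?_
        have heq : ∫⁻ v, Ψ' (s, v) ∂(Measure.map Y ℙ) = F s * ∫⁻ v, Ψ s (ext v) ∂(Measure.map Y ℙ) :=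
          lintegral_const_mul (F s) (hm2 s)
        rw [heq]
        have hle : ∫⁻ v, Ψ s (ext v) ∂(Measure.map Y ℙ) ≤ 1 := by
          rw [lintegral_map (hm2 s) hmY]
          have hcongr : ∀ ω, Ψ s (ext (Y ω)) = Ψ s (seqs ξ (k0 + k) ω) := by
            intro ω
            refine (hΨc _ _ _ fun i hi => ?_).symm
            rw [hext_seq ω]; simp [hi]
          rw [lintegral_congr hcongr]
          exact hΨi s
        calc F s * ∫⁻ v, Ψ s (ext v) ∂(Measure.map Y ℙ) ≤ F s * 1 := mul_le_mul_right hle _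
          _ = F s := mul_one _
    _ = ∫⁻ ω, F (X ω) ∂ℙ := lintegral_map hF hmX

lemma measurable_tailG (ν : Measure ℝ) : Measurable fun u : ℝ => ν (Ioi u) :=
  Antitone.measurable fun _ _ huv => measure_mono (Ioi_subset_Ioi huv)

lemma base_eq_prob (hmξ : ∀ k, Measurable (ξ k))
    (hindep : iIndepFun ξ ℙ)
    (hident : ∀ k : ℕ, IdentDistrib (ξ k) (ξ 0) ℙ ℙ)
    (k0 k : ℕ) (t : ℝ) :
    ∫⁻ ω, (if Sx (seqs ξ k0 ω) k ≤ t
        then (Measure.map (ξ 0) ℙ) (Ioi (t - Sx (seqs ξ k0 ω) k)) else 0) ∂ℙ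
      = ℙ {ω | Sx (seqs ξ k0 ω) k ≤ t ∧ t < Sx (seqs ξ k0 ω) k + ξ (k0 + k) ω} := by
  classical
  set ν := Measure.map (ξ 0) ℙ with hν
  set X : Ω → ℝ := fun ω => Sx (seqs ξ k0 ω) k with hX
  set Z : Ω → ℝ := ξ (k0 + k) with hZ
  have hmX : Measurable X := measurable_SxSeq hmξ k0 k
  have hmZ : Measurable Z := hmξ (k0 + k)
  have hXZ : IndepFun X Z ℙ := indep_sum_next hmξ hindep k0 k
  have hmap : Measure.map (fun ω => (X ω, Z ω)) ℙ = (Measure.map X ℙ).prod (Measure.map Z ℙ) :=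
    (indepFun_iff_map_prod_eq_prod_map_map hmX.aemeasurable hmZ.aemeasurable).mp hXZ
  have hZν : Measure.map Z ℙ = ν := (hident (k0 + k)).map_eq
  set D : Set (ℝ × ℝ) := {p | p.1 ≤ t ∧ t < p.1 + p.2} with hD
  have hDm : MeasurableSet D :=
    (measurableSet_le measurable_fst measurable_const).inter
      (measurableSet_lt measurable_const (measurable_fst.add measurable_snd))
  have hslice : ∀ s : ℝ, (if s ≤ t then ν (Ioi (t - s)) else 0) = ν (Prod.mk s ⁻¹' D) := by
    intro s
    by_cases hs : s ≤ t
    · have h1 : Prod.mk s ⁻¹' D = Ioi (t - s) := by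
        ext y; simp [hD, hs, sub_lt_iff_lt_add']
      rw [h1, if_pos hs]
    · have h1 : Prod.mk s ⁻¹' D = ∅ := by
        ext y; simp [hD, hs]
      rw [h1, if_neg hs]; simp
  have hF : Measurable fun s : ℝ => (if s ≤ t then ν (Ioi (t - s)) else 0) := by
    refine Measurable.ite (measurableSet_le measurable_id measurable_const)
      ((measurable_tailG ν).comp (measurable_const.sub measurable_id)) measurable_const
  calc ∫⁻ ω, (if X ω ≤ t then ν (Ioi (t - X ω)) else 0) ∂ℙ
      = ∫⁻ s, (if s ≤ t then ν (Ioi (t - s)) else 0) ∂(Measure.map X ℙ) :=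
        (lintegral_map hF hmX).symm
    _ = ∫⁻ s, ν (Prod.mk s ⁻¹' D) ∂(Measure.map X ℙ) := lintegral_congr hslice
    _ = (Measure.map X ℙ).prod ν D := (Measure.prod_apply hDm).symm
    _ = Measure.map (fun ω => (X ω, Z ω)) ℙ D := by rw [hmap, hZν]
    _ = ℙ ((fun ω => (X ω, Z ω)) ⁻¹' D) := Measure.map_apply (hmX.prodMk hmZ) hDm
    _ = ℙ {ω | X ω ≤ t ∧ t < X ω + Z ω} := rfl

lemma sum_base_le_one (hmξ : ∀ k, Measurable (ξ k))
    (hindep : iIndepFun ξ ℙ)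
    (hident : ∀ k : ℕ, IdentDistrib (ξ k) (ξ 0) ℙ ℙ)
    (hξpos : ∀ k, ∀ᵐ ω ∂ℙ, 0 < ξ k ω)
    (k0 N : ℕ) (t : ℝ) :
    ∑ k ∈ Finset.range N, ∫⁻ ω, (if Sx (seqs ξ k0 ω) k ≤ t
        then (Measure.map (ξ 0) ℙ) (Ioi (t - Sx (seqs ξ k0 ω) k)) else 0) ∂ℙ ≤ 1 := by
  classical
  set E : ℕ → Set Ω := fun k =>
    {ω | Sx (seqs ξ k0 ω) k ≤ t ∧ t < Sx (seqs ξ k0 ω) k + ξ (k0 + k) ω} with hE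
  have hsum : ∑ k ∈ Finset.range N, ∫⁻ ω, (if Sx (seqs ξ k0 ω) k ≤ t
      then (Measure.map (ξ 0) ℙ) (Ioi (t - Sx (seqs ξ k0 ω) k)) else 0) ∂ℙ
      = ∑ k ∈ Finset.range N, ℙ (E k) :=
    Finset.sum_congr rfl fun k _ => base_eq_prob hmξ hindep hident k0 k t
  have hEm : ∀ k, MeasurableSet (E k) := by
    intro k
    have : E k = {ω | Sx (seqs ξ k0 ω) k ≤ t} ∩ {ω | t < Sx (seqs ξ k0 ω) k + ξ (k0 + k) ω} := rfl
    rw [this]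
    exact (measurableSet_le (measurable_SxSeq hmξ k0 k) measurable_const).inter
      (measurableSet_lt measurable_const ((measurable_SxSeq hmξ k0 k).add (hmξ (k0 + k))))
  have hbad : ℙ {ω | ¬ ∀ i, 0 < ξ i ω} = 0 := ae_iff.mp (ae_all_iff.mpr hξpos)
  have hdisj : ∀ j k, j < k → ℙ (E j ∩ E k) = 0 := by
    intro j k hjk
    refine measure_mono_null ?_ hbad
    rintro ω ⟨⟨hj1, hj2⟩, ⟨hk1, hk2⟩⟩
    simp only [mem_setOf_eq]
    intro hpos
    have h1 : Sx (seqs ξ k0 ω) (j+1) = Sx (seqs ξ k0 ω) j + ξ (k0 + j) ω :=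
      Finset.sum_range_succ _ j
    have h2 : Sx (seqs ξ k0 ω) (j+1) ≤ Sx (seqs ξ k0 ω) k := by
      refine Finset.sum_le_sum_of_subset_of_nonneg (Finset.range_subset_range.mpr (by omega)) ?_
      intro i _ _
      exact (hpos (k0 + i)).le
    linarith
  have hpair : (↑(Finset.range N) : Set ℕ).Pairwise (Function.onFun (AEDisjoint ℙ) E) := by
    intro j _ k _ hne
    rcases hne.lt_or_gt with h | h
    · exact hdisj j k h
    · have h2 := hdisj k j h
      have : E j ∩ E k = E k ∩ E j := Set.inter_comm _ _
      show ℙ (E j ∩ E k) = 0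
      rw [this]; exact h2
  calc ∑ k ∈ Finset.range N, ∫⁻ ω, (if Sx (seqs ξ k0 ω) k ≤ t
        then (Measure.map (ξ 0) ℙ) (Ioi (t - Sx (seqs ξ k0 ω) k)) else 0) ∂ℙ
      = ∑ k ∈ Finset.range N, ℙ (E k) := hsum
    _ = ℙ (⋃ k ∈ Finset.range N, E k) :=
        (measure_biUnion_finset₀ hpair fun k _ => (hEm k).nullMeasurableSet).symm
    _ ≤ 1 := prob_le_one

lemma HH_lint (hmξ : ∀ k, Measurable (ξ k))
    (hindep : iIndepFun ξ ℙ)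
    (hident : ∀ k : ℕ, IdentDistrib (ξ k) (ξ 0) ℙ ℙ)
    (hξpos : ∀ k, ∀ᵐ ω ∂ℙ, 0 < ξ k ω) :
    ∀ l (N k0 : ℕ) (t : ℝ),
      ∫⁻ ω, HH (fun u => (Measure.map (ξ 0) ℙ) (Ioi u)) l N t (seqs ξ k0 ω) ∂ℙ ≤ 1 := by
  set G : ℝ → ℝ≥0∞ := fun u => (Measure.map (ξ 0) ℙ) (Ioi u) with hGdef
  have hG : Measurable G := measurable_tailG _
  intro l
  induction l with
  | zero =>
    intro N k0 t
    show ∫⁻ _, (1 : ℝ≥0∞) ∂ℙ ≤ 1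
    rw [lintegral_one, measure_univ]
  | succ l ih =>
    intro N k0 t
    have hexp : ∀ ω : Ω, HH G (l+1) N t (seqs ξ k0 ω)
        = ∑ k ∈ Finset.range N, aa G t (seqs ξ k0 ω) k
            * HH G l (N-k) (t - Sx (seqs ξ k0 ω) k) (seqs ξ (k0+k) ω) := by
      intro ω
      show (∑ k ∈ Finset.range N, _) = _
      refine Finset.sum_congr rfl fun k _ => ?_
      rw [seqs_shift]
    have hterm_meas : ∀ k, Measurable fun ω =>
        aa G t (seqs ξ k0 ω) k * HH G l (N-k) (t - Sx (seqs ξ k0 ω) k) (seqs ξ (k0+k) ω) := by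
      intro k
      refine Measurable.mul ?_ ?_
      · exact (measurable_aa hG k).comp (measurable_const.prodMk (measurable_seqs hmξ k0))
      · refine (measurable_HH hG l (N-k)).comp (Measurable.prodMk ?_ (measurable_seqs hmξ (k0+k)))
        exact measurable_const.sub (measurable_SxSeq hmξ k0 k)
    calc ∫⁻ ω, HH G (l+1) N t (seqs ξ k0 ω) ∂ℙ
        = ∑ k ∈ Finset.range N, ∫⁻ ω, aa G t (seqs ξ k0 ω) k
            * HH G l (N-k) (t - Sx (seqs ξ k0 ω) k) (seqs ξ (k0+k) ω) ∂ℙ := by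
          rw [lintegral_congr hexp]
          exact lintegral_finset_sum _ fun k _ => hterm_meas k
      _ ≤ ∑ k ∈ Finset.range N, ∫⁻ ω, (if Sx (seqs ξ k0 ω) k ≤ t
            then G (t - Sx (seqs ξ k0 ω) k) else 0) ∂ℙ := by
          refine Finset.sum_le_sum fun k _ => ?_
          refine split_bound hmξ hindep k0 k (N-k)
            (fun s => if s ≤ t then G (t - s) else 0)
            (Measurable.ite (measurableSet_le measurable_id measurable_const)
              (hG.comp (measurable_const.sub measurable_id)) measurable_const)
            (fun s x => HH G l (N-k) (t - s) x)
            ((measurable_HH hG l (N-k)).comp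
              ((measurable_const.sub measurable_fst).prodMk measurable_snd))
            (fun u x y h => HH_congr l (N-k) (t - u) x y h)
            (fun s => ih (N-k) (k0+k) (t - s))
      _ ≤ 1 := sum_base_le_one hmξ hindep hident hξpos k0 N t


lemma Bpow_lint (hmξ : ∀ k, Measurable (ξ k))
    (hindep : iIndepFun ξ ℙ)
    (hident : ∀ k : ℕ, IdentDistrib (ξ k) (ξ 0) ℙ ℙ)
    (hξpos : ∀ k, ∀ᵐ ω ∂ℙ, 0 < ξ k ω)
    (l : ℕ) (t : ℝ) :
    ∫⁻ ω, (∑' k : ℕ, if rw ξ k ω ≤ t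
        then (Measure.map (ξ 0) ℙ) (Ioi (t - rw ξ k ω)) else 0) ^ l ∂ℙ
      ≤ (l.factorial : ℝ≥0∞) := by
  set G : ℝ → ℝ≥0∞ := fun u => (Measure.map (ξ 0) ℙ) (Ioi u) with hGdef
  have hG : Measurable G := measurable_tailG _
  have hrw : ∀ (k : ℕ) (ω : Ω), rw ξ k ω = Sx (seqs ξ 0 ω) k := by
    intro k ω
    refine Finset.sum_congr rfl fun i _ => ?_
    show ξ i ω = ξ (0 + i) ω
    rw [Nat.zero_add]
  have hterm_eq : ∀ (ω : Ω) (k : ℕ),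
      (if rw ξ k ω ≤ t then G (t - rw ξ k ω) else 0) = aa G t (seqs ξ 0 ω) k := by
    intro ω k
    rw [aa, ← hrw]
  have hts : ∀ ω : Ω, (∑' k : ℕ, if rw ξ k ω ≤ t then G (t - rw ξ k ω) else 0)
      = ⨆ N, TT G N t (seqs ξ 0 ω) := by
    intro ω
    calc (∑' k : ℕ, if rw ξ k ω ≤ t then G (t - rw ξ k ω) else 0)
        = ∑' k : ℕ, aa G t (seqs ξ 0 ω) k := tsum_congr (hterm_eq ω)
      _ = ⨆ N, ∑ k ∈ Finset.range N, aa G t (seqs ξ 0 ω) k := ENNReal.tsum_eq_iSup_nat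
      _ = ⨆ N, TT G N t (seqs ξ 0 ω) := rfl
  have hmono : ∀ ω : Ω, Monotone fun N => TT G N t (seqs ξ 0 ω) := by
    intro ω N N' h
    exact Finset.sum_le_sum_of_subset (Finset.range_subset_range.mpr h)
  have hpow : ∀ ω : Ω, (⨆ N, TT G N t (seqs ξ 0 ω)) ^ l = ⨆ N, (TT G N t (seqs ξ 0 ω)) ^ l := by
    intro ω
    have h1 := tendsto_atTop_iSup (hmono ω)
    have h2 : Tendsto (fun N => TT G N t (seqs ξ 0 ω) ^ l) atTop
        (𝓝 ((⨆ N, TT G N t (seqs ξ 0 ω)) ^ l)) := ((ENNReal.continuous_pow l).tendsto _).comp h1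
    have h3 : Monotone fun N => TT G N t (seqs ξ 0 ω) ^ l :=
      fun a b hab => pow_le_pow_left₀ zero_le (hmono ω hab) l
    exact tendsto_nhds_unique h2 (tendsto_atTop_iSup h3)
  have hTm : ∀ N, Measurable fun ω => TT G N t (seqs ξ 0 ω) ^ l := by
    intro N
    refine Measurable.pow_const ?_ l
    have hmTT : Measurable fun x : ℕ → ℝ => TT G N t x :=
      Finset.measurable_sum _ fun k _ =>
        (measurable_aa hG k).comp (measurable_const.prodMk measurable_id)
    exact hmTT.comp (measurable_seqs hmξ 0)
  calc ∫⁻ ω, (∑' k : ℕ, if rw ξ k ω ≤ t then G (t - rw ξ k ω) else 0) ^ l ∂ℙ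
      = ∫⁻ ω, ⨆ N, TT G N t (seqs ξ 0 ω) ^ l ∂ℙ :=
        lintegral_congr fun ω => by rw [hts ω, hpow ω]
    _ = ⨆ N, ∫⁻ ω, TT G N t (seqs ξ 0 ω) ^ l ∂ℙ :=
        lintegral_iSup hTm fun N N' h ω => pow_le_pow_left₀ zero_le (hmono ω h) l
    _ ≤ (l.factorial : ℝ≥0∞) := by
        refine iSup_le fun N => ?_
        calc ∫⁻ ω, TT G N t (seqs ξ 0 ω) ^ l ∂ℙ
            ≤ ∫⁻ ω, (l.factorial : ℝ≥0∞) * HH G l N t (seqs ξ 0 ω) ∂ℙ :=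
              lintegral_mono fun ω => TT_pow_le l N t _
          _ = (l.factorial : ℝ≥0∞) * ∫⁻ ω, HH G l N t (seqs ξ 0 ω) ∂ℙ :=
              lintegral_const_mul _
                ((measurable_HH hG l N).comp (measurable_const.prodMk (measurable_seqs hmξ 0)))
          _ ≤ (l.factorial : ℝ≥0∞) * 1 :=
              mul_le_mul_right (HH_lint hmξ hindep hident hξpos l N 0 t) _
          _ = (l.factorial : ℝ≥0∞) := mul_one _

end Prob

end St11



open St11 in
open scoped ENNReal in
theorem statement11
    {Ω : Type*} [MeasureSpace Ω] [IsProbabilityMeasure (ℙ : Measure Ω)]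
    (ξ : ℕ → Ω → ℝ) (hmξ : ∀ k, Measurable (ξ k))
    (hξpos : ∀ k, ∀ᵐ ω ∂ℙ, 0 < ξ k ω)
    (hindep : iIndepFun ξ ℙ)
    (hident : ∀ k : ℕ, IdentDistrib (ξ k) (ξ 0) ℙ ℙ)
    (α : ℝ) (hα : 0 < α ∧ α < 1) (ℓξ : ℝ → ℝ) (hℓξ : SlowlyVarying ℓξ)
    (hA1 : Tendsto (fun t => (ℙ {ω | t < ξ 0 ω}).toReal / (t ^ (-α) * ℓξ t)) atTop (nhds 1))
    (f : ℝ → ℝ) (hmf : Measurable f)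
    (hfloc : ∀ T > (0:ℝ), ∃ M : ℝ, ∀ t ∈ Icc (0:ℝ) T, |f t| ≤ M)
    (hfO : (fun t => f t) =O[atTop] (fun t => (ℙ {ω | t < ξ 0 ω}).toReal)) :
    ∀ l : ℕ, 1 ≤ l →
      (fun t => ∫ ω,
          (∑' k : ℕ, if rw ξ k ω ≤ t then |f (t - rw ξ k ω)| else 0) ^ l ∂ℙ)
        =O[atTop] (fun _ => (1 : ℝ)) := by
  classical
  intro l _hl
  set ν := Measure.map (ξ 0) ℙ with hν
  haveI : IsProbabilityMeasure ν := Measure.isProbabilityMeasure_map (hmξ 0).aemeasurable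
  have htail : ∀ u : ℝ, ℙ {ω | u < ξ 0 ω} = ν (Ioi u) := by
    intro u
    rw [hν, Measure.map_apply (hmξ 0) measurableSet_Ioi]
    rfl
  have hGfin : ∀ u : ℝ, ν (Ioi u) ≠ ⊤ := fun u => measure_ne_top ν _
  have hGpos : ∀ u : ℝ, ν (Ioi u) ≠ 0 := by
    intro u
    by_contra h0
    have hev : (fun s => ((ℙ {ω | s < ξ 0 ω}).toReal / (s ^ (-α) * ℓξ s)))
        =ᶠ[atTop] (fun _ => (0:ℝ)) := by
      filter_upwards [eventually_ge_atTop u] with s hs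
      have h1 : ν (Ioi s) = 0 := measure_mono_null (Ioi_subset_Ioi hs) h0
      rw [htail s, h1]
      simp
    have h1 : Tendsto (fun s => ((ℙ {ω | s < ξ 0 ω}).toReal / (s ^ (-α) * ℓξ s)))
        atTop (nhds 0) := Tendsto.congr' hev.symm tendsto_const_nhds
    have := tendsto_nhds_unique hA1 h1
    norm_num at this
  set g : ℝ → ℝ := fun u => (ν (Ioi u)).toReal with hg
  have hganti : ∀ {u v : ℝ}, u ≤ v → g v ≤ g u := fun {u v} huv =>
    ENNReal.toReal_mono (hGfin u) (measure_mono (Ioi_subset_Ioi huv))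
  have hgpos : ∀ u, 0 < g u := fun u => ENNReal.toReal_pos (hGpos u) (hGfin u)
  obtain ⟨c, hc⟩ := Asymptotics.isBigO_iff.mp hfO
  obtain ⟨t1, ht1⟩ := Filter.eventually_atTop.mp hc
  set T0 : ℝ := max t1 1 with hT0
  have hT0pos : (0:ℝ) < T0 := lt_of_lt_of_le one_pos (le_max_right _ _)
  obtain ⟨M, hM⟩ := hfloc T0 hT0pos
  have hM0 : 0 ≤ M := le_trans (abs_nonneg _) (hM 0 ⟨le_refl 0, hT0pos.le⟩)
  set K : ℝ := max c (M / g T0) with hK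
  have hK0 : 0 ≤ K := le_trans (div_nonneg hM0 (hgpos T0).le) (le_max_right _ _)
  have hKey : ∀ u : ℝ, 0 ≤ u → |f u| ≤ K * g u := by
    intro u hu
    by_cases hcase : u ≤ T0
    · have h1 : |f u| ≤ M := hM u ⟨hu, hcase⟩
      have h2 : g T0 ≤ g u := hganti hcase
      calc |f u| ≤ M := h1
        _ = (M / g T0) * g T0 := (div_mul_cancel₀ M (hgpos T0).ne').symm
        _ ≤ (M / g T0) * g u := mul_le_mul_of_nonneg_left h2 (div_nonneg hM0 (hgpos T0).le)
        _ ≤ K * g u := mul_le_mul_of_nonneg_right (le_max_right _ _) (hgpos u).le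
    · push_neg at hcase
      have hu1 : t1 ≤ u := le_trans (le_max_left _ _) hcase.le
      have h1 := ht1 u hu1
      rw [Real.norm_eq_abs, Real.norm_eq_abs] at h1
      have h2 : |(ℙ {ω | u < ξ 0 ω}).toReal| = g u := by
        rw [htail u]
        exact abs_of_nonneg ENNReal.toReal_nonneg
      rw [h2] at h1
      calc |f u| ≤ c * g u := h1
        _ ≤ K * g u := mul_le_mul_of_nonneg_right (le_max_left _ _) (hgpos u).le
  set K' : ℝ≥0∞ := ENNReal.ofReal K with hK'
  have hterm : ∀ (t : ℝ) (ω : Ω) (k : ℕ),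
      ENNReal.ofReal (if rw ξ k ω ≤ t then |f (t - rw ξ k ω)| else 0)
        ≤ K' * (if rw ξ k ω ≤ t then ν (Ioi (t - rw ξ k ω)) else 0) := by
    intro t ω k
    by_cases h : rw ξ k ω ≤ t
    · simp only [if_pos h]
      have hu : 0 ≤ t - rw ξ k ω := sub_nonneg.mpr h
      calc ENNReal.ofReal |f (t - rw ξ k ω)| ≤ ENNReal.ofReal (K * g (t - rw ξ k ω)) :=
            ENNReal.ofReal_le_ofReal (hKey _ hu)
        _ = K' * ENNReal.ofReal (g (t - rw ξ k ω)) := ENNReal.ofReal_mul hK0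
        _ ≤ K' * ν (Ioi (t - rw ξ k ω)) := mul_le_mul_right ENNReal.ofReal_toReal_le _
    · simp [h]
  have hRnn : (0:ℝ) ≤ K ^ l * l.factorial := by positivity
  have hbound : ∀ t : ℝ,
      ∫ ω, (∑' k : ℕ, if rw ξ k ω ≤ t then |f (t - rw ξ k ω)| else 0) ^ l ∂ℙ
        ≤ K ^ l * l.factorial := by
    intro t
    set A : Ω → ℝ := fun ω => ∑' k : ℕ, if rw ξ k ω ≤ t then |f (t - rw ξ k ω)| else 0 with hA
    set A' : Ω → ℝ≥0∞ := fun ω =>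
      ∑' k : ℕ, ENNReal.ofReal (if rw ξ k ω ≤ t then |f (t - rw ξ k ω)| else 0) with hA'
    set B : Ω → ℝ≥0∞ := fun ω =>
      ∑' k : ℕ, (if rw ξ k ω ≤ t then ν (Ioi (t - rw ξ k ω)) else 0) with hB
    have hterm_nonneg : ∀ (ω : Ω) (k : ℕ),
        0 ≤ (if rw ξ k ω ≤ t then |f (t - rw ξ k ω)| else 0) := by
      intro ω k
      split_ifs
      exacts [abs_nonneg _, le_refl 0]
    have hA_eq : ∀ ω, A ω = (A' ω).toReal := by
      intro ω
      by_cases hs : Summable fun k : ℕ => (if rw ξ k ω ≤ t then |f (t - rw ξ k ω)| else 0)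
      · simp only [hA, hA']
        rw [← ENNReal.ofReal_tsum_of_nonneg (hterm_nonneg ω) hs,
          ENNReal.toReal_ofReal (tsum_nonneg (hterm_nonneg ω))]
      · have h1 : A ω = 0 := tsum_eq_zero_of_not_summable hs
        have h2 : A' ω = ⊤ := by
          by_contra h2
          apply hs
          have h3 := ENNReal.summable_toReal h2
          refine h3.congr fun k => ?_
          rw [ENNReal.toReal_ofReal (hterm_nonneg ω k)]
        rw [h1, h2]
        simp
    have hmrw : ∀ k : ℕ, Measurable (rw ξ k) := fun k =>
      Finset.measurable_sum _ fun i _ => hmξ i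
    have hmterm : ∀ k : ℕ, Measurable fun ω =>
        ENNReal.ofReal (if rw ξ k ω ≤ t then |f (t - rw ξ k ω)| else 0) := by
      intro k
      apply Measurable.ennreal_ofReal
      exact Measurable.ite (measurableSet_le (hmrw k) measurable_const)
        ((hmf.comp (measurable_const.sub (hmrw k))).abs) measurable_const
    have hmA' : Measurable A' := Measurable.ennreal_tsum hmterm
    have hmA : Measurable A := by
      have h1 : A = fun ω => (A' ω).toReal := funext hA_eq
      rw [h1]
      exact hmA'.ennreal_toReal
    have hmB : Measurable B := by
      refine Measurable.ennreal_tsum fun k => ?_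
      exact Measurable.ite (measurableSet_le (hmrw k) measurable_const)
        ((measurable_tailG ν).comp (measurable_const.sub (hmrw k))) measurable_const
    have hApos : ∀ ω, 0 ≤ A ω := fun ω => tsum_nonneg (hterm_nonneg ω)
    have hA'le : ∀ ω, A' ω ≤ K' * B ω := by
      intro ω
      rw [hB, ← ENNReal.tsum_mul_left]
      exact ENNReal.tsum_le_tsum (hterm t ω)
    have hBpow := St11.Bpow_lint hmξ hindep hident hξpos l t
    have hptw : ∀ ω, ENNReal.ofReal (A ω ^ l) ≤ K' ^ l * B ω ^ l := by
      intro ω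
      rw [ENNReal.ofReal_pow (hApos ω)]
      have h1 : ENNReal.ofReal (A ω) ≤ K' * B ω := by
        rw [hA_eq ω]
        exact le_trans ENNReal.ofReal_toReal_le (hA'le ω)
      calc ENNReal.ofReal (A ω) ^ l ≤ (K' * B ω) ^ l := pow_le_pow_left₀ zero_le h1 l
        _ = K' ^ l * B ω ^ l := mul_pow _ _ _
    have hlint : ∫⁻ ω, ENNReal.ofReal (A ω ^ l) ∂ℙ ≤ K' ^ l * l.factorial := by
      calc ∫⁻ ω, ENNReal.ofReal (A ω ^ l) ∂ℙ ≤ ∫⁻ ω, K' ^ l * B ω ^ l ∂ℙ :=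
            lintegral_mono hptw
        _ = K' ^ l * ∫⁻ ω, B ω ^ l ∂ℙ := lintegral_const_mul _ (hmB.pow_const l)
        _ ≤ K' ^ l * l.factorial := mul_le_mul_right hBpow _
    by_cases hint : Integrable (fun ω => A ω ^ l) ℙ
    · rw [show (∫ ω, (∑' k : ℕ, if rw ξ k ω ≤ t then |f (t - rw ξ k ω)| else 0) ^ l ∂ℙ)
          = ∫ ω, A ω ^ l ∂ℙ from rfl]
      rw [integral_eq_lintegral_of_nonneg_ae (Filter.Eventually.of_forall fun ω =>
        pow_nonneg (hApos ω) l) ((hmA.pow_const l).aestronglyMeasurable)]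
      have hfin : K' ^ l * (l.factorial : ℝ≥0∞) ≠ ⊤ :=
        ENNReal.mul_ne_top (ENNReal.pow_ne_top ENNReal.ofReal_ne_top) (ENNReal.natCast_ne_top _)
      calc (∫⁻ ω, ENNReal.ofReal (A ω ^ l) ∂ℙ).toReal
          ≤ (K' ^ l * (l.factorial : ℝ≥0∞)).toReal := ENNReal.toReal_mono hfin hlint
        _ = K ^ l * l.factorial := by
            rw [ENNReal.toReal_mul, ENNReal.toReal_pow, hK', ENNReal.toReal_ofReal hK0,
              ENNReal.toReal_natCast]
    · rw [show (∫ ω, (∑' k : ℕ, if rw ξ k ω ≤ t then |f (t - rw ξ k ω)| else 0) ^ l ∂ℙ)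
          = ∫ ω, A ω ^ l ∂ℙ from rfl]
      rw [integral_undef hint]
      exact hRnn
  have hnn : ∀ t : ℝ, 0 ≤ ∫ ω, (∑' k : ℕ, if rw ξ k ω ≤ t then |f (t - rw ξ k ω)| else 0) ^ l ∂ℙ := by
    intro t
    refine integral_nonneg fun ω => pow_nonneg (tsum_nonneg ?_) l
    intro k
    split_ifs
    exacts [abs_nonneg _, le_refl 0]
  rw [Asymptotics.isBigO_iff]
  refine ⟨K ^ l * l.factorial, Filter.Eventually.of_forall fun t => ?_⟩
  rw [Real.norm_eq_abs, abs_of_nonneg (hnn t), norm_one, mul_one]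
  exact hbound t
end
end

section
/- Assume P{ξ>t} ~ t^{−α} ℓ_ξ(t) as t→∞ for some α∈(0,1) and slowly varying ℓ_ξ. Suppose that for every l∈ℕ, E[|X(t)|^l] = O(P{ξ>t}) as t→∞ and t ↦ E[|X(t)|^l] is locally bounded. Then for every l∈ℕ, E[|Y(t)|^l] = O(1) as t→∞, where Y(t) = Σ_{k≥0} X_{k+1}(t−S_k) 1{S_k ≤ t} is the random process with immigration. -/
open MeasureTheory ProbabilityTheory Filter Topology Set Asymptotics

noncomputable section

open scoped ENNReal NNReal

namespace Stmt14

lemma ennreal_pow_add_le (m : ℕ) (x a : ℝ≥0∞) :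
    (x + a) ^ (m + 1) ≤ x ^ (m + 1) + ((m : ℝ≥0∞) + 1) * a * (x + a) ^ m := by
  induction m with
  | zero => simp [pow_succ]
  | succ m ih =>
    have hx : x ^ (m + 1) ≤ (x + a) ^ (m + 1) := pow_le_pow_left' (le_add_right le_rfl) _
    calc (x + a) ^ (m + 1 + 1) = (x + a) ^ (m + 1) * (x + a) := pow_succ _ _
      _ ≤ (x ^ (m + 1) + ((m : ℝ≥0∞) + 1) * a * (x + a) ^ m) * (x + a) :=
          mul_le_mul_left ih _
      _ = x ^ (m + 1) * x + (x ^ (m + 1) * a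
            + ((m : ℝ≥0∞) + 1) * a * ((x + a) ^ m * (x + a))) := by ring
      _ ≤ x ^ (m + 1) * x + ((x + a) ^ (m + 1) * a
            + ((m : ℝ≥0∞) + 1) * a * ((x + a) ^ m * (x + a))) := by
          gcongr
      _ = x ^ (m + 1 + 1) + (((m+1 : ℕ) : ℝ≥0∞) + 1) * a * (x + a) ^ (m + 1) := by
          push_cast; ring

lemma tsum_pow_le (m : ℕ) (a : ℕ → ℝ≥0∞) :
    (∑' k, a k) ^ (m + 1)
      ≤ ((m : ℝ≥0∞) + 1) * ∑' k, a k * (∑ j ∈ Finset.range (k + 1), a j) ^ m := by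
  have hfin : ∀ N : ℕ, (∑ k ∈ Finset.range N, a k) ^ (m + 1)
      ≤ ((m : ℝ≥0∞) + 1) * ∑ k ∈ Finset.range N, a k * (∑ j ∈ Finset.range (k + 1), a j) ^ m := by
    intro N
    induction N with
    | zero => simp
    | succ N ih =>
      have hb : ∑ j ∈ Finset.range (N + 1), a j = ∑ j ∈ Finset.range N, a j + a N :=
        Finset.sum_range_succ a N
      calc (∑ k ∈ Finset.range (N + 1), a k) ^ (m + 1)
          = (∑ k ∈ Finset.range N, a k + a N) ^ (m + 1) := by rw [hb]
        _ ≤ (∑ k ∈ Finset.range N, a k) ^ (m + 1)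
            + ((m : ℝ≥0∞) + 1) * a N * (∑ k ∈ Finset.range N, a k + a N) ^ m :=
            ennreal_pow_add_le m _ _
        _ ≤ ((m : ℝ≥0∞) + 1) * ∑ k ∈ Finset.range N, a k * (∑ j ∈ Finset.range (k + 1), a j) ^ m
            + ((m : ℝ≥0∞) + 1) * a N * (∑ k ∈ Finset.range N, a k + a N) ^ m :=
            add_le_add_left ih _
        _ = ((m : ℝ≥0∞) + 1) * (∑ k ∈ Finset.range N, a k * (∑ j ∈ Finset.range (k + 1), a j) ^ m
            + a N * (∑ j ∈ Finset.range (N + 1), a j) ^ m) := by rw [hb]; ring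
        _ = ((m : ℝ≥0∞) + 1) * ∑ k ∈ Finset.range (N + 1),
              a k * (∑ j ∈ Finset.range (k + 1), a j) ^ m := by
            rw [Finset.sum_range_succ (f := fun k => a k * (∑ j ∈ Finset.range (k + 1), a j) ^ m), hb]
  have h1 : Tendsto (fun N => ∑ k ∈ Finset.range N, a k) atTop (nhds (∑' k, a k)) :=
    ENNReal.tendsto_nat_tsum a
  have h2 : Tendsto (fun N => (∑ k ∈ Finset.range N, a k) ^ (m + 1)) atTop
      (nhds ((∑' k, a k) ^ (m + 1))) :=
    ((ENNReal.continuous_pow (m + 1)).continuousAt).tendsto.comp h1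
  refine le_of_tendsto h2 (Filter.Eventually.of_forall fun N => (hfin N).trans ?_)
  exact mul_le_mul_right (ENNReal.sum_le_tsum _) _

lemma tsum_liminf_le (f : ℕ → ℕ → ℝ≥0∞) :
    ∑' k, Filter.atTop.liminf (fun n => f n k) ≤ Filter.atTop.liminf (fun n => ∑' k, f n k) := by
  have h := MeasureTheory.lintegral_liminf_le (μ := (Measure.count : Measure ℕ)) (f := f) (u := atTop)
    (fun n => measurable_of_countable _)
  simpa [MeasureTheory.lintegral_count] using h

def dy (n : ℕ) (u : ℝ) : ℝ := (⌈u * 2 ^ n⌉ : ℤ) / 2 ^ n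

lemma le_dy (n : ℕ) (u : ℝ) : u ≤ dy n u := by
  rw [dy, le_div_iff₀ (by positivity : (0:ℝ) < 2 ^ n)]
  exact Int.le_ceil _

lemma dy_le (n : ℕ) (u : ℝ) : dy n u ≤ u + ((2:ℝ) ^ n)⁻¹ := by
  rw [dy, div_le_iff₀ (by positivity : (0:ℝ) < 2 ^ n)]
  have h := (Int.ceil_lt_add_one (u * 2 ^ n)).le
  calc (⌈u * 2 ^ n⌉ : ℝ) ≤ u * 2 ^ n + 1 := h
    _ = (u + ((2:ℝ) ^ n)⁻¹) * 2 ^ n := by field_simp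

lemma tendsto_dy (u : ℝ) : Tendsto (fun n => dy n u) atTop (nhds u) := by
  have h2 : Tendsto (fun n : ℕ => u + ((2:ℝ) ^ n)⁻¹) atTop (nhds (u + 0)) :=
    tendsto_const_nhds.add
      (tendsto_inv_atTop_zero.comp (tendsto_pow_atTop_atTop_of_one_lt one_lt_two))
  rw [add_zero] at h2
  exact tendsto_of_tendsto_of_tendsto_of_le_of_le tendsto_const_nhds h2
    (fun n => le_dy n u) (fun n => dy_le n u)

lemma ite_dy_pow_eq_tsum {δ : Type*} (F : δ → ℝ → ℝ) (s : δ → ℝ) (n : ℕ) (t : ℝ) (e : ℕ)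
    (he : e ≠ 0) (d : δ) :
    (if s d ≤ t then ENNReal.ofReal |F d (dy n (t - s d))| else 0) ^ e
      = ∑' z : ℤ, (if s d ≤ t ∧ ⌈(t - s d) * 2 ^ n⌉ = z then
          ENNReal.ofReal |F d ((z : ℝ) / 2 ^ n)| ^ e else 0) := by
  by_cases h : s d ≤ t
  · rw [if_pos h, tsum_eq_single (⌈(t - s d) * 2 ^ n⌉ : ℤ) ?_]
    · rw [if_pos ⟨h, rfl⟩]; rfl
    · intro z hz
      rw [if_neg]
      rintro ⟨-, h2⟩
      exact hz h2.symm
  · rw [if_neg h, zero_pow he]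
    have hz : ∀ z : ℤ, (if s d ≤ t ∧ ⌈(t - s d) * 2 ^ n⌉ = z then
        ENNReal.ofReal |F d ((z : ℝ) / 2 ^ n)| ^ e else 0) = 0 :=
      fun z => if_neg (fun hc => h hc.1)
    simp [hz]

lemma measurable_ite_dy {δ : Type*} [MeasurableSpace δ] {F : δ → ℝ → ℝ}
    (hF : ∀ q : ℝ, Measurable fun d => F d q) {s : δ → ℝ} (hs : Measurable s) (n : ℕ) (t : ℝ) :
    Measurable fun d => (if s d ≤ t then ENNReal.ofReal |F d (dy n (t - s d))| else 0 : ℝ≥0∞) := by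
  have heq : (fun d => (if s d ≤ t then ENNReal.ofReal |F d (dy n (t - s d))| else 0 : ℝ≥0∞))
      = fun d => ∑' z : ℤ, (if s d ≤ t ∧ ⌈(t - s d) * 2 ^ n⌉ = z then
          ENNReal.ofReal |F d ((z : ℝ) / 2 ^ n)| ^ 1 else 0) := by
    funext d
    rw [← ite_dy_pow_eq_tsum F s n t 1 one_ne_zero d, pow_one]
  rw [heq]
  refine Measurable.ennreal_tsum fun z => Measurable.ite ?_ ?_ measurable_const
  · have h1 : MeasurableSet {d | s d ≤ t} := hs measurableSet_Iic
    have h2 : MeasurableSet {d | ⌈(t - s d) * 2 ^ n⌉ = z} :=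
      ((measurable_const.sub hs).mul measurable_const).ceil (measurableSet_singleton z)
    exact h1.inter h2
  · exact ((hF _).abs.ennreal_ofReal).pow_const 1

lemma tsum_ite_ceil (c : Prop) [Decidable c] (r : ℝ) :
    (∑' z : ℤ, (if c ∧ ⌈r⌉ = z then (1 : ℝ≥0∞) else 0)) = if c then 1 else 0 := by
  by_cases hc : c
  · rw [if_pos hc, tsum_eq_single (⌈r⌉ : ℤ)]
    · rw [if_pos ⟨hc, rfl⟩]
    · intro z hz
      exact if_neg fun h => hz h.2.symm
  · rw [if_neg hc]
    have h0 : ∀ z : ℤ, (if c ∧ ⌈r⌉ = z then (1 : ℝ≥0∞) else 0) = 0 :=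
      fun z => if_neg fun h => hc h.1
    simp [h0]

def rwa' {Ω : Type*} (ξ : ℕ → Ω → ℝ) (k : ℕ) (ω : Ω) : ℝ := ∑ i ∈ Finset.range k, ξ i ω

lemma sub_bound {Ω : Type*} [MeasureSpace Ω] [IsProbabilityMeasure (ℙ : Measure Ω)]
    (X : ℕ → ℝ → Ω → ℝ) (ξ : ℕ → Ω → ℝ)
    (hmX : ∀ k t, Measurable (X k t)) (hmξ : ∀ k, Measurable (ξ k))
    (hindep : iIndepFun (m := fun _ : ℕ => (inferInstance : MeasurableSpace ((ℝ → ℝ) × ℝ)))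
      (fun k ω => ((fun s => X k s ω), ξ k ω)) ℙ)
    (hident : ∀ k : ℕ, IdentDistrib (fun ω => ((fun s => X k s ω), ξ k ω))
      (fun ω => ((fun s => X 0 s ω), ξ 0 ω)) ℙ ℙ)
    (e : ℕ) (he : e ≠ 0) (C : ℝ≥0∞)
    (hC : ∀ v : ℝ, 0 ≤ v → ∫⁻ ω, ENNReal.ofReal |X 0 v ω| ^ e ∂ℙ ≤ C * ℙ {ω | v < ξ 0 ω})
    (t : ℝ) (n : ℕ) (k : ℕ)
    (Φ : (Fin k → (ℝ → ℝ) × ℝ) → ℝ≥0∞) (hΦ : Measurable Φ) :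
    ∫⁻ ω, Φ (fun j => ((fun s => X (j : ℕ) s ω), ξ (j : ℕ) ω))
        * (if rwa' ξ k ω ≤ t then ENNReal.ofReal |X k (dy n (t - rwa' ξ k ω)) ω| else 0) ^ e ∂ℙ
      ≤ C * ∫⁻ ω, Φ (fun j => ((fun s => X (j : ℕ) s ω), ξ (j : ℕ) ω))
        * (if rwa' ξ k ω ≤ t ∧ t < rwa' ξ (k + 1) ω then 1 else 0) ∂ℙ := by
  classical
  set pair : ℕ → Ω → (ℝ → ℝ) × ℝ := fun j ω => ((fun s => X j s ω), ξ j ω) with hpairdef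
  have hmpair : ∀ j, Measurable (pair j) :=
    fun j => (measurable_pi_lambda _ fun s => hmX j s).prodMk (hmξ j)
  set V : Ω → Fin k → (ℝ → ℝ) × ℝ := fun ω j => pair (j : ℕ) ω with hVdef
  have hmV : Measurable V := measurable_pi_lambda _ fun j => hmpair _
  have hindepVk : IndepFun V (pair k) ℙ := by
    have hdisj : Disjoint (Finset.range k) ({k} : Finset ℕ) := by
      simp [Finset.disjoint_singleton_right]
    have h := hindep.indepFun_finset (Finset.range k) {k} hdisj hmpair
    exact h.comp (φ := fun v (j : Fin k) => v ⟨(j : ℕ), Finset.mem_range.2 j.isLt⟩)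
      (ψ := fun w => w ⟨k, Finset.mem_singleton_self k⟩)
      (measurable_pi_lambda _ fun j => measurable_pi_apply _) (measurable_pi_apply (X := fun _ : ({k} : Finset ℕ) => (ℝ → ℝ) × ℝ) _)
  set sp : (Fin k → (ℝ → ℝ) × ℝ) → ℝ := fun v => ∑ j : Fin k, (v j).2 with hspdef
  have hmsp : Measurable sp := Finset.measurable_sum _ fun j _ => (measurable_pi_apply j).snd
  have hS : ∀ ω, sp (V ω) = rwa' ξ k ω := by
    intro ω
    simp only [hspdef, hVdef, hpairdef]
    exact Fin.sum_univ_eq_sum_range (fun i => ξ i ω) k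
  set Φ' : ℤ → (Fin k → (ℝ → ℝ) × ℝ) → ℝ≥0∞ := fun z v =>
    Φ v * (if sp v ≤ t ∧ ⌈(t - sp v) * 2 ^ n⌉ = z then 1 else 0) with hΦ'def
  have hmΦ' : ∀ z, Measurable (Φ' z) := by
    intro z
    refine hΦ.mul (Measurable.ite ?_ measurable_const measurable_const)
    exact (hmsp measurableSet_Iic).inter
      (((measurable_const.sub hmsp).mul measurable_const).ceil (measurableSet_singleton z))
  set ψ : ℤ → (ℝ → ℝ) × ℝ → ℝ≥0∞ :=
    fun z p => ENNReal.ofReal |p.1 ((z : ℝ) / 2 ^ n)| ^ e with hψdef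
  have hmψ : ∀ z, Measurable (ψ z) :=
    fun z => (((measurable_pi_apply _).comp measurable_fst).abs.ennreal_ofReal).pow_const e
  set ψ2 : ℤ → (ℝ → ℝ) × ℝ → ℝ≥0∞ :=
    fun z p => if (z : ℝ) / 2 ^ n < p.2 then 1 else 0 with hψ2def
  have hmψ2 : ∀ z, Measurable (ψ2 z) :=
    fun z => Measurable.ite (measurable_snd measurableSet_Ioi) measurable_const measurable_const
  have hmrw : ∀ m : ℕ, Measurable (rwa' ξ m) :=
    fun m => Finset.measurable_sum _ fun i _ => hmξ i
  set J : Ω → ℝ≥0∞ := fun ω => if t - rwa' ξ k ω < ξ k ω then 1 else 0 with hJdef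
  have hmJ : Measurable J := by
    refine Measurable.ite ?_ measurable_const measurable_const
    have hset : {a : Ω | t - rwa' ξ k a < ξ k a} = {a : Ω | t < rwa' ξ k a + ξ k a} := by
      ext a; simp [sub_lt_iff_lt_add']
    rw [hset]
    exact measurableSet_lt measurable_const ((hmrw k).add (hmξ k))
  -- pointwise decomposition
  have hdec : ∀ ω, Φ (V ω)
      * (if rwa' ξ k ω ≤ t then ENNReal.ofReal |X k (dy n (t - rwa' ξ k ω)) ω| else 0) ^ e
      = ∑' z : ℤ, Φ' z (V ω) * ψ z (pair k ω) := by
    intro ω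
    rw [ite_dy_pow_eq_tsum (fun d q => X k q d) (rwa' ξ k) n t e he ω, ← ENNReal.tsum_mul_left]
    refine tsum_congr fun z => ?_
    simp only [hΦ'def, hψdef, hS ω]
    by_cases hc : rwa' ξ k ω ≤ t ∧ ⌈(t - rwa' ξ k ω) * 2 ^ n⌉ = z
    · rw [if_pos hc, if_pos hc, mul_one]
    · rw [if_neg hc, if_neg hc]; simp
  -- per-z bound
  have hz : ∀ z : ℤ, ∫⁻ ω, Φ' z (V ω) * ψ z (pair k ω) ∂ℙ
      ≤ C * ∫⁻ ω, Φ' z (V ω) * J ω ∂ℙ := by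
    intro z
    rcases lt_or_ge z 0 with hzneg | hzpos
    · have hzero : ∀ ω, Φ' z (V ω) * ψ z (pair k ω) = 0 := by
        intro ω
        have : ¬(sp (V ω) ≤ t ∧ ⌈(t - sp (V ω)) * 2 ^ n⌉ = z) := by
          rintro ⟨h1, h2⟩
          have h3 : (0 : ℤ) ≤ ⌈(t - sp (V ω)) * 2 ^ n⌉ :=
            Int.ceil_nonneg (mul_nonneg (by linarith) (by positivity))
          omega
        simp only [hΦ'def, if_neg this, mul_zero, zero_mul]
      rw [lintegral_congr hzero, lintegral_zero]
      exact zero_le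
    · have hq0 : (0 : ℝ) ≤ (z : ℝ) / 2 ^ n :=
        div_nonneg (by exact_mod_cast hzpos) (by positivity)
      have hmul1 : ∫⁻ ω, Φ' z (V ω) * ψ z (pair k ω) ∂ℙ
          = (∫⁻ ω, Φ' z (V ω) ∂ℙ) * ∫⁻ ω, ψ z (pair k ω) ∂ℙ := by
        have h := lintegral_mul_eq_lintegral_mul_lintegral_of_indepFun
          ((hmΦ' z).comp hmV) ((hmψ z).comp (hmpair k))
          (hindepVk.comp (hmΦ' z) (hmψ z))
        simpa [Function.comp] using h
      have hid1 : ∫⁻ ω, ψ z (pair k ω) ∂ℙ = ∫⁻ ω, ENNReal.ofReal |X 0 ((z : ℝ) / 2 ^ n) ω| ^ e ∂ℙ := by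
        have h := ((hident k).comp (hmψ z)).lintegral_eq
        simpa [Function.comp, hψdef, hpairdef] using h
      have hid2 : ℙ {ω | (z : ℝ) / 2 ^ n < ξ 0 ω} = ∫⁻ ω, ψ2 z (pair k ω) ∂ℙ := by
        have h := ((hident k).symm.comp (hmψ2 z)).lintegral_eq
        have h0 : ∫⁻ ω, ψ2 z (pair 0 ω) ∂ℙ = ℙ {ω | (z : ℝ) / 2 ^ n < ξ 0 ω} := by
          have hind : (fun ω => ψ2 z (pair 0 ω))
              = Set.indicator {ω | (z : ℝ) / 2 ^ n < ξ 0 ω} (1 : Ω → ℝ≥0∞) := by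
            funext ω
            simp [hψ2def, hpairdef, Set.indicator_apply, Set.mem_setOf_eq]
          rw [hind]
          exact lintegral_indicator_one (hmξ 0 measurableSet_Ioi)
        rw [← h0]
        simpa [Function.comp] using h
      have hmul2 : (∫⁻ ω, Φ' z (V ω) ∂ℙ) * ∫⁻ ω, ψ2 z (pair k ω) ∂ℙ
          = ∫⁻ ω, Φ' z (V ω) * ψ2 z (pair k ω) ∂ℙ := by
        have h := lintegral_mul_eq_lintegral_mul_lintegral_of_indepFun
          ((hmΦ' z).comp hmV) ((hmψ2 z).comp (hmpair k))
          (hindepVk.comp (hmΦ' z) (hmψ2 z))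
        simpa [Function.comp] using h.symm
      have hpt : ∀ ω, Φ' z (V ω) * ψ2 z (pair k ω) ≤ Φ' z (V ω) * J ω := by
        intro ω
        by_cases hc : sp (V ω) ≤ t ∧ ⌈(t - sp (V ω)) * 2 ^ n⌉ = z
        · refine mul_le_mul_right ?_ _
          simp only [hψ2def, hpairdef, hJdef]
          by_cases h2 : (z : ℝ) / 2 ^ n < ξ k ω
          · have hle : t - rwa' ξ k ω ≤ (z : ℝ) / 2 ^ n := by
              rw [← hS ω]
              rw [le_div_iff₀ (by positivity : (0:ℝ) < 2 ^ n)]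
              rw [← hc.2]
              exact Int.le_ceil _
            rw [if_pos h2, if_pos (lt_of_le_of_lt hle h2)]
          · rw [if_neg h2]
            exact zero_le
        · have : Φ' z (V ω) = 0 := by simp only [hΦ'def, if_neg hc, mul_zero]
          simp [this]
      calc ∫⁻ ω, Φ' z (V ω) * ψ z (pair k ω) ∂ℙ
          = (∫⁻ ω, Φ' z (V ω) ∂ℙ) * ∫⁻ ω, ψ z (pair k ω) ∂ℙ := hmul1
        _ ≤ (∫⁻ ω, Φ' z (V ω) ∂ℙ) * (C * ℙ {ω | (z : ℝ) / 2 ^ n < ξ 0 ω}) := by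
            refine mul_le_mul_right ?_ _
            rw [hid1]
            exact hC _ hq0
        _ = C * ((∫⁻ ω, Φ' z (V ω) ∂ℙ) * ∫⁻ ω, ψ2 z (pair k ω) ∂ℙ) := by
            rw [hid2]; ring
        _ = C * ∫⁻ ω, Φ' z (V ω) * ψ2 z (pair k ω) ∂ℙ := by rw [hmul2]
        _ ≤ C * ∫⁻ ω, Φ' z (V ω) * J ω ∂ℙ := mul_le_mul_right (lintegral_mono hpt) _
  -- sum over z
  have hsum2 : ∀ ω, ∑' z : ℤ, Φ' z (V ω) * J ω
      = Φ (V ω) * (if rwa' ξ k ω ≤ t ∧ t < rwa' ξ (k + 1) ω then 1 else 0) := by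
    intro ω
    rw [ENNReal.tsum_mul_right]
    have h1 : (∑' z : ℤ, Φ' z (V ω)) = Φ (V ω) * (if rwa' ξ k ω ≤ t then 1 else 0) := by
      simp only [hΦ'def, hS ω]
      rw [ENNReal.tsum_mul_left]
      congr 1
      exact tsum_ite_ceil _ _
    rw [h1]
    have hsucc : rwa' ξ (k + 1) ω = rwa' ξ k ω + ξ k ω := Finset.sum_range_succ _ _
    simp only [hJdef, hsucc]
    by_cases hA : rwa' ξ k ω ≤ t
    · by_cases hB : t - rwa' ξ k ω < ξ k ω
      · have hB' : t < rwa' ξ k ω + ξ k ω := by linarith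
        simp [hA, hB, hB', mul_assoc]
      · have hB' : ¬ t < rwa' ξ k ω + ξ k ω := fun h => hB (by linarith)
        simp [hB, hB']
    · simp [hA]
  calc ∫⁻ ω, Φ (fun j : Fin k => ((fun s => X (j : ℕ) s ω), ξ (j : ℕ) ω))
        * (if rwa' ξ k ω ≤ t then ENNReal.ofReal |X k (dy n (t - rwa' ξ k ω)) ω| else 0) ^ e ∂ℙ
      = ∫⁻ ω, ∑' z : ℤ, Φ' z (V ω) * ψ z (pair k ω) ∂ℙ := lintegral_congr hdec
    _ = ∑' z : ℤ, ∫⁻ ω, Φ' z (V ω) * ψ z (pair k ω) ∂ℙ :=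
        lintegral_tsum fun z => (((hmΦ' z).comp hmV).mul ((hmψ z).comp (hmpair k))).aemeasurable
    _ ≤ ∑' z : ℤ, C * ∫⁻ ω, Φ' z (V ω) * J ω ∂ℙ := Summable.tsum_le_tsum hz ENNReal.summable ENNReal.summable
    _ = C * ∑' z : ℤ, ∫⁻ ω, Φ' z (V ω) * J ω ∂ℙ := ENNReal.tsum_mul_left
    _ = C * ∫⁻ ω, ∑' z : ℤ, Φ' z (V ω) * J ω ∂ℙ := by
        rw [lintegral_tsum (f := fun z ω => Φ' z (V ω) * J ω)
          (fun z => (((hmΦ' z).comp hmV).mul hmJ).aemeasurable)]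
    _ = C * ∫⁻ ω, Φ (fun j : Fin k => ((fun s => X (j : ℕ) s ω), ξ (j : ℕ) ω))
        * (if rwa' ξ k ω ≤ t ∧ t < rwa' ξ (k + 1) ω then 1 else 0) ∂ℙ := by
        rw [lintegral_congr hsum2]

lemma pow_add_le_two_pow (m : ℕ) (x y : ℝ≥0∞) : (x + y) ^ m ≤ 2 ^ m * (x ^ m + y ^ m) := by
  calc (x + y) ^ m ≤ (2 * max x y) ^ m := by
        refine pow_le_pow_left' ?_ m
        rw [two_mul]
        exact add_le_add (le_max_left x y) (le_max_right x y)
    _ = 2 ^ m * (max x y) ^ m := mul_pow 2 _ m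
    _ ≤ 2 ^ m * (x ^ m + y ^ m) := by
        refine mul_le_mul_right ?_ _
        rcases le_total x y with h | h
        · rw [max_eq_right h]; exact le_add_self
        · rw [max_eq_left h]; exact le_self_add

def spj {k : ℕ} (j : Fin k) (v : Fin k → (ℝ → ℝ) × ℝ) : ℝ :=
  ∑ i ∈ (Finset.range (j : ℕ)).attach,
    (v ⟨i.1, lt_trans (Finset.mem_range.mp i.2) j.isLt⟩).2

lemma measurable_spj {k : ℕ} (j : Fin k) : Measurable (spj j) :=
  Finset.measurable_sum _ fun i _ => (measurable_pi_apply _).snd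

lemma spj_apply {Ω : Type*} (X : ℕ → ℝ → Ω → ℝ) (ξ : ℕ → Ω → ℝ) {k : ℕ} (j : Fin k) (ω : Ω) :
    spj j (fun i : Fin k => ((fun s => X (i : ℕ) s ω), ξ (i : ℕ) ω)) = rwa' ξ (j : ℕ) ω :=
  Finset.sum_attach (Finset.range (j : ℕ)) (fun i => ξ i ω)

lemma key_bound {Ω : Type*} [MeasureSpace Ω] [IsProbabilityMeasure (ℙ : Measure Ω)]
    (X : ℕ → ℝ → Ω → ℝ) (ξ : ℕ → Ω → ℝ)
    (hmX : ∀ k t, Measurable (X k t)) (hmξ : ∀ k, Measurable (ξ k))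
    (hindep : iIndepFun (m := fun _ : ℕ => (inferInstance : MeasurableSpace ((ℝ → ℝ) × ℝ)))
      (fun k ω => ((fun s => X k s ω), ξ k ω)) ℙ)
    (hident : ∀ k : ℕ, IdentDistrib (fun ω => ((fun s => X k s ω), ξ k ω))
      (fun ω => ((fun s => X 0 s ω), ξ 0 ω)) ℙ ℙ)
    (hmom : ∀ e : ℕ, e ≠ 0 → ∃ C : ℝ≥0∞, C ≠ ⊤ ∧ ∀ v : ℝ, 0 ≤ v →
      ∫⁻ ω, ENNReal.ofReal |X 0 v ω| ^ e ∂ℙ ≤ C * ℙ {ω | v < ξ 0 ω})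
    (hchi : ∀ t : ℝ, ∀ᵐ ω ∂ℙ,
      (∑' k : ℕ, (if rwa' ξ k ω ≤ t ∧ t < rwa' ξ (k + 1) ω then (1 : ℝ≥0∞) else 0)) ≤ 1)
    (m : ℕ) :
    ∃ D : ℝ≥0∞, D ≠ ⊤ ∧ ∀ t : ℝ, ∀ n : ℕ,
      ∫⁻ ω, (∑' k : ℕ,
        (if rwa' ξ k ω ≤ t then ENNReal.ofReal |X k (dy n (t - rwa' ξ k ω)) ω| else 0)) ^ m ∂ℙ
        ≤ D := by
  classical
  have hmrw : ∀ j : ℕ, Measurable (rwa' ξ j) := fun j => Finset.measurable_sum _ fun i _ => hmξ i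
  have hmg : ∀ (n : ℕ) (t : ℝ) (k : ℕ), Measurable (fun ω =>
      (if rwa' ξ k ω ≤ t then ENNReal.ofReal |X k (dy n (t - rwa' ξ k ω)) ω| else 0 : ℝ≥0∞)) :=
    fun n t k => measurable_ite_dy (fun q => hmX k q) (hmrw k) n t
  have hmchi : ∀ (t : ℝ) (k : ℕ), Measurable (fun ω =>
      (if rwa' ξ k ω ≤ t ∧ t < rwa' ξ (k + 1) ω then (1 : ℝ≥0∞) else 0)) := by
    intro t k
    refine Measurable.ite ?_ measurable_const measurable_const
    exact ((hmrw k) measurableSet_Iic).inter ((hmrw (k + 1)) measurableSet_Ioi)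
  induction m with
  | zero => exact ⟨1, ENNReal.one_ne_top, fun t n => by simp⟩
  | succ m ih =>
    obtain ⟨D, hDtop, hIH⟩ := ih
    obtain ⟨C1, hC1top, hC1⟩ := hmom 1 one_ne_zero
    obtain ⟨Cm, hCmtop, hCm⟩ := hmom (m + 1) (Nat.succ_ne_zero m)
    refine ⟨((m : ℝ≥0∞) + 1) * (2 ^ m * (C1 * D + Cm)), ?_, ?_⟩
    · exact ENNReal.mul_ne_top (by simp [ENNReal.add_ne_top]) (ENNReal.mul_ne_top
        (by simp) (ENNReal.add_ne_top.2 ⟨ENNReal.mul_ne_top hC1top hDtop, hCmtop⟩))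
    intro t n
    set g : ℕ → Ω → ℝ≥0∞ := fun k ω =>
      if rwa' ξ k ω ≤ t then ENNReal.ofReal |X k (dy n (t - rwa' ξ k ω)) ω| else 0 with hgdef
    set chi : ℕ → Ω → ℝ≥0∞ := fun k ω =>
      if rwa' ξ k ω ≤ t ∧ t < rwa' ξ (k + 1) ω then 1 else 0 with hchidef
    -- the two sub_bound instances
    have hbound : ∀ k : ℕ, ∫⁻ ω, g k ω * (∑ j ∈ Finset.range k, g j ω) ^ m ∂ℙ
        ≤ C1 * ∫⁻ ω, (∑ j ∈ Finset.range k, g j ω) ^ m * chi k ω ∂ℙ := by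
      intro k
      -- path-space functional
      set Gp : Fin k → (Fin k → (ℝ → ℝ) × ℝ) → ℝ≥0∞ := fun j v =>
        if spj j v ≤ t then ENNReal.ofReal |(v j).1 (dy n (t - spj j v))| else 0 with hGpdef
      have hmGp : ∀ j, Measurable (Gp j) := by
        intro j
        refine measurable_ite_dy (F := fun v q => (v j).1 q) (fun q => ?_) (measurable_spj j) n t
        exact (measurable_pi_apply q).comp ((measurable_pi_apply j).fst)
      set Φk : (Fin k → (ℝ → ℝ) × ℝ) → ℝ≥0∞ := fun v => (∑ j : Fin k, Gp j v) ^ m with hΦkdef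
      have hmΦk : Measurable Φk :=
        (Finset.measurable_sum _ fun j _ => hmGp j).pow_const m
      have hGpV : ∀ (ω : Ω) (j : Fin k),
          Gp j (fun i : Fin k => ((fun s => X (i : ℕ) s ω), ξ (i : ℕ) ω)) = g (j : ℕ) ω := by
        intro ω j
        simp only [hGpdef, hgdef, spj_apply X ξ j ω]
      have hΦkV : ∀ ω : Ω,
          Φk (fun i : Fin k => ((fun s => X (i : ℕ) s ω), ξ (i : ℕ) ω))
            = (∑ j ∈ Finset.range k, g j ω) ^ m := by
        intro ω
        simp only [hΦkdef]
        congr 1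
        rw [← Fin.sum_univ_eq_sum_range (fun j => g j ω) k]
        exact Finset.sum_congr rfl fun j _ => hGpV ω j
      have h := sub_bound X ξ hmX hmξ hindep hident 1 one_ne_zero C1
        (by simpa using hC1) t n k Φk hmΦk
      simp only [pow_one] at h
      calc ∫⁻ ω, g k ω * (∑ j ∈ Finset.range k, g j ω) ^ m ∂ℙ
          = ∫⁻ ω, Φk (fun i : Fin k => ((fun s => X (i : ℕ) s ω), ξ (i : ℕ) ω)) * g k ω ∂ℙ := by
            refine lintegral_congr fun ω => ?_
            rw [hΦkV ω, mul_comm]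
        _ ≤ C1 * ∫⁻ ω, Φk (fun i : Fin k => ((fun s => X (i : ℕ) s ω), ξ (i : ℕ) ω))
              * chi k ω ∂ℙ := h
        _ = C1 * ∫⁻ ω, (∑ j ∈ Finset.range k, g j ω) ^ m * chi k ω ∂ℙ := by
            congr 1
            exact lintegral_congr fun ω => by rw [hΦkV ω]
    have hbound2 : ∀ k : ℕ, ∫⁻ ω, g k ω ^ (m + 1) ∂ℙ ≤ Cm * ∫⁻ ω, chi k ω ∂ℙ := by
      intro k
      have h := sub_bound X ξ hmX hmξ hindep hident (m + 1) (Nat.succ_ne_zero m) Cm hCm t n k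
        (fun _ => 1) measurable_const
      calc ∫⁻ ω, g k ω ^ (m + 1) ∂ℙ
          = ∫⁻ ω, (fun _ : Fin k → (ℝ → ℝ) × ℝ => (1 : ℝ≥0∞))
              (fun i : Fin k => ((fun s => X (i : ℕ) s ω), ξ (i : ℕ) ω)) * g k ω ^ (m + 1) ∂ℙ :=
            lintegral_congr fun ω => (one_mul _).symm
        _ ≤ Cm * ∫⁻ ω, (fun _ : Fin k → (ℝ → ℝ) × ℝ => (1 : ℝ≥0∞))
              (fun i : Fin k => ((fun s => X (i : ℕ) s ω), ξ (i : ℕ) ω)) * chi k ω ∂ℙ := h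
        _ = Cm * ∫⁻ ω, chi k ω ∂ℙ := by
            congr 1
            exact lintegral_congr fun ω => one_mul _
    have hZm : ∫⁻ ω, (∑' k, g k ω) ^ m ∂ℙ ≤ D := hIH t n
    have step1 : ∫⁻ ω, (∑' k, g k ω) ^ (m + 1) ∂ℙ
        ≤ ((m : ℝ≥0∞) + 1) * ∑' k, ∫⁻ ω, g k ω * (∑ j ∈ Finset.range (k + 1), g j ω) ^ m ∂ℙ := by
      calc ∫⁻ ω, (∑' k, g k ω) ^ (m + 1) ∂ℙ
          ≤ ∫⁻ ω, ((m : ℝ≥0∞) + 1) * ∑' k, g k ω * (∑ j ∈ Finset.range (k + 1), g j ω) ^ m ∂ℙ :=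
            lintegral_mono fun ω => tsum_pow_le m _
        _ = ((m : ℝ≥0∞) + 1) * ∫⁻ ω, ∑' k, g k ω * (∑ j ∈ Finset.range (k + 1), g j ω) ^ m ∂ℙ :=
            lintegral_const_mul' _ _ (ENNReal.add_ne_top.2 ⟨ENNReal.natCast_ne_top m, ENNReal.one_ne_top⟩)
        _ = ((m : ℝ≥0∞) + 1) * ∑' k, ∫⁻ ω, g k ω * (∑ j ∈ Finset.range (k + 1), g j ω) ^ m ∂ℙ := by
            rw [lintegral_tsum (f := fun k ω => g k ω * (∑ j ∈ Finset.range (k + 1), g j ω) ^ m)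
              (fun k => ((hmg n t k).mul
                ((Finset.measurable_sum _ fun j _ => hmg n t j).pow_const m)).aemeasurable)]
    have step2 : ∀ k, ∫⁻ ω, g k ω * (∑ j ∈ Finset.range (k + 1), g j ω) ^ m ∂ℙ
        ≤ 2 ^ m * (∫⁻ ω, g k ω * (∑ j ∈ Finset.range k, g j ω) ^ m ∂ℙ
          + ∫⁻ ω, g k ω ^ (m + 1) ∂ℙ) := by
      intro k
      calc ∫⁻ ω, g k ω * (∑ j ∈ Finset.range (k + 1), g j ω) ^ m ∂ℙ
          ≤ ∫⁻ ω, 2 ^ m * (g k ω * (∑ j ∈ Finset.range k, g j ω) ^ m + g k ω ^ (m + 1)) ∂ℙ := by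
            refine lintegral_mono fun ω => ?_
            rw [Finset.sum_range_succ]
            calc g k ω * (∑ j ∈ Finset.range k, g j ω + g k ω) ^ m
                ≤ g k ω * (2 ^ m * ((∑ j ∈ Finset.range k, g j ω) ^ m + g k ω ^ m)) :=
                  mul_le_mul_right (pow_add_le_two_pow m _ _) _
              _ = 2 ^ m * (g k ω * (∑ j ∈ Finset.range k, g j ω) ^ m + g k ω ^ (m + 1)) := by
                  ring
        _ = 2 ^ m * ∫⁻ ω, g k ω * (∑ j ∈ Finset.range k, g j ω) ^ m + g k ω ^ (m + 1) ∂ℙ :=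
            lintegral_const_mul' _ _ (ENNReal.pow_ne_top ENNReal.ofNat_ne_top)
        _ = 2 ^ m * (∫⁻ ω, g k ω * (∑ j ∈ Finset.range k, g j ω) ^ m ∂ℙ
            + ∫⁻ ω, g k ω ^ (m + 1) ∂ℙ) := by
            rw [lintegral_add_left (f := fun ω => g k ω * (∑ j ∈ Finset.range k, g j ω) ^ m) ((hmg n t k).mul
              ((Finset.measurable_sum _ fun j _ => hmg n t j).pow_const m))]
    have hsum_chi : ∑' k, ∫⁻ ω, chi k ω ∂ℙ ≤ 1 := by
      rw [← lintegral_tsum (f := fun k ω => chi k ω) (fun k => (hmchi t k).aemeasurable)]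
      calc ∫⁻ ω, ∑' k, chi k ω ∂ℙ ≤ ∫⁻ _, 1 ∂ℙ := lintegral_mono_ae ((hchi t).mono fun ω h => h)
        _ = 1 := by simp
    have hsum_cchi : ∑' k, ∫⁻ ω, (∑ j ∈ Finset.range k, g j ω) ^ m * chi k ω ∂ℙ ≤ D := by
      rw [← lintegral_tsum (f := fun k ω => (∑ j ∈ Finset.range k, g j ω) ^ m * chi k ω)
        (fun k => (((Finset.measurable_sum _ fun j _ => hmg n t j).pow_const m).mul
          (hmchi t k)).aemeasurable)]
      calc ∫⁻ ω, ∑' k, (∑ j ∈ Finset.range k, g j ω) ^ m * chi k ω ∂ℙ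
          ≤ ∫⁻ ω, (∑' j, g j ω) ^ m ∂ℙ := by
            refine lintegral_mono_ae ((hchi t).mono fun ω hω => ?_)
            calc ∑' k, (∑ j ∈ Finset.range k, g j ω) ^ m * chi k ω
                ≤ ∑' k, (∑' j, g j ω) ^ m * chi k ω :=
                  Summable.tsum_le_tsum (fun k => mul_le_mul_left
                    (pow_le_pow_left' (ENNReal.sum_le_tsum _) m) _)
                    ENNReal.summable ENNReal.summable
              _ = (∑' j, g j ω) ^ m * ∑' k, chi k ω := ENNReal.tsum_mul_left
              _ ≤ (∑' j, g j ω) ^ m * 1 := mul_le_mul_right hω _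
              _ = (∑' j, g j ω) ^ m := mul_one _
        _ ≤ D := hZm
    calc ∫⁻ ω, (∑' k, g k ω) ^ (m + 1) ∂ℙ
        ≤ ((m : ℝ≥0∞) + 1) * ∑' k, ∫⁻ ω, g k ω * (∑ j ∈ Finset.range (k + 1), g j ω) ^ m ∂ℙ :=
          step1
      _ ≤ ((m : ℝ≥0∞) + 1) * ∑' k, 2 ^ m
            * (C1 * ∫⁻ ω, (∑ j ∈ Finset.range k, g j ω) ^ m * chi k ω ∂ℙ
              + Cm * ∫⁻ ω, chi k ω ∂ℙ) := by
          refine mul_le_mul_right (Summable.tsum_le_tsum (fun k => ?_) ENNReal.summable ENNReal.summable) _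
          exact (step2 k).trans (mul_le_mul_right (add_le_add (hbound k) (hbound2 k)) _)
      _ = ((m : ℝ≥0∞) + 1) * (2 ^ m
            * (C1 * ∑' k, ∫⁻ ω, (∑ j ∈ Finset.range k, g j ω) ^ m * chi k ω ∂ℙ
              + Cm * ∑' k, ∫⁻ ω, chi k ω ∂ℙ)) := by
          rw [ENNReal.tsum_mul_left]
          congr 2
          rw [ENNReal.tsum_add, ENNReal.tsum_mul_left, ENNReal.tsum_mul_left]
      _ ≤ ((m : ℝ≥0∞) + 1) * (2 ^ m * (C1 * D + Cm * 1)) := by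
          exact mul_le_mul_right (mul_le_mul_right (add_le_add
            (mul_le_mul_right hsum_cchi _) (mul_le_mul_right hsum_chi _)) _) _
      _ = ((m : ℝ≥0∞) + 1) * (2 ^ m * (C1 * D + Cm)) := by rw [mul_one]

set_option maxHeartbeats 2000000 in
theorem main_test
    {Ω : Type*} [MeasureSpace Ω] [IsProbabilityMeasure (ℙ : Measure Ω)]
    (X : ℕ → ℝ → Ω → ℝ) (ξ : ℕ → Ω → ℝ)
    (hmX : ∀ k t, Measurable (X k t))
    (hmξ : ∀ k, Measurable (ξ k))
    (hξpos : ∀ k, ∀ᵐ ω ∂ℙ, 0 < ξ k ω)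
    (hpath : ∀ k, ∀ᵐ ω ∂ℙ, (∀ t : ℝ, ContinuousWithinAt (fun s => X k s ω) (Ici t) t))
    (hindep : iIndepFun (m := fun _ : ℕ => (inferInstance : MeasurableSpace ((ℝ → ℝ) × ℝ)))
      (fun k ω => ((fun t => X k t ω), ξ k ω)) ℙ)
    (hident : ∀ k : ℕ, IdentDistrib (fun ω => ((fun t => X k t ω), ξ k ω))
      (fun ω => ((fun t => X 0 t ω), ξ 0 ω)) ℙ ℙ)
    (α : ℝ) (hα : 0 < α ∧ α < 1) (ℓξ : ℝ → ℝ)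
    (hA1 : Tendsto (fun t => (ℙ {ω | t < ξ 0 ω}).toReal / (t ^ (-α) * ℓξ t)) atTop (nhds 1))
    (hint : ∀ (l : ℕ) (t : ℝ), 0 ≤ t → Integrable (fun ω => |X 0 t ω| ^ l) ℙ)
    (hmomO : ∀ l : ℕ, 1 ≤ l →
      (fun t => ∫ ω, |X 0 t ω| ^ l ∂ℙ) =O[atTop] (fun t => (ℙ {ω | t < ξ 0 ω}).toReal))
    (hmomloc : ∀ l : ℕ, 1 ≤ l → ∀ T > (0:ℝ), ∃ M : ℝ, ∀ t ∈ Icc (0:ℝ) T,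
      (∫ ω, |X 0 t ω| ^ l ∂ℙ) ≤ M) :
    ∀ l : ℕ, 1 ≤ l →
      (fun t => ∫ ω,
          |∑' k : ℕ, if rwa' ξ k ω ≤ t then X k (t - rwa' ξ k ω) ω else 0| ^ l ∂ℙ)
        =O[atTop] (fun _ => (1 : ℝ)) := by
  classical
  intro l hl
  -- Step 1: the moment bound in ℝ≥0∞ form
  have hmom : ∀ e : ℕ, e ≠ 0 → ∃ C : ℝ≥0∞, C ≠ ⊤ ∧ ∀ v : ℝ, 0 ≤ v →
      ∫⁻ ω, ENNReal.ofReal |X 0 v ω| ^ e ∂ℙ ≤ C * ℙ {ω | v < ξ 0 ω} := by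
    intro e he
    have he1 : 1 ≤ e := Nat.one_le_iff_ne_zero.2 he
    obtain ⟨c, hc⟩ := Asymptotics.isBigO_iff.1 (hmomO e he1)
    rw [Filter.eventually_atTop] at hc
    obtain ⟨T1, hT1⟩ := hc
    have hev : ∀ᶠ v in atTop,
        (0:ℝ) < (ℙ {ω | v < ξ 0 ω}).toReal / (v ^ (-α) * ℓξ v) :=
      hA1.eventually (eventually_gt_nhds zero_lt_one)
    rw [Filter.eventually_atTop] at hev
    obtain ⟨T2, hT2⟩ := hev
    set s0 : ℝ := max (max T1 T2) 1 with hs0def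
    have hs0pos : (0:ℝ) < s0 := lt_of_lt_of_le one_pos (le_max_right _ _)
    have hτpos : 0 < (ℙ {ω | s0 < ξ 0 ω}).toReal := by
      have h := hT2 s0 (le_trans (le_max_right T1 T2) (le_max_left _ _))
      by_contra hle
      push_neg at hle
      have h0 : (ℙ {ω | s0 < ξ 0 ω}).toReal = 0 := le_antisymm hle ENNReal.toReal_nonneg
      rw [h0, zero_div] at h
      exact lt_irrefl 0 h
    obtain ⟨M, hM⟩ := hmomloc e he1 s0 hs0pos
    have hM0 : 0 ≤ M :=
      le_trans (integral_nonneg fun ω => pow_nonneg (abs_nonneg _) e)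
        (hM s0 ⟨le_of_lt hs0pos, le_rfl⟩)
    set K : ℝ := max c (M / (ℙ {ω | s0 < ξ 0 ω}).toReal) with hKdef
    have hK0 : 0 ≤ K := le_trans (div_nonneg hM0 ENNReal.toReal_nonneg) (le_max_right _ _)
    refine ⟨ENNReal.ofReal K, ENNReal.ofReal_ne_top, ?_⟩
    intro v hv
    have hreal : (∫ ω, |X 0 v ω| ^ e ∂ℙ) ≤ K * (ℙ {ω | v < ξ 0 ω}).toReal := by
      rcases le_or_gt s0 v with hcase | hcase
      · have h := hT1 v (le_trans (le_trans (le_max_left T1 T2) (le_max_left _ _)) hcase)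
        rw [Real.norm_eq_abs, Real.norm_eq_abs,
          abs_of_nonneg (integral_nonneg fun ω => pow_nonneg (abs_nonneg _) e),
          abs_of_nonneg ENNReal.toReal_nonneg] at h
        exact h.trans (mul_le_mul_of_nonneg_right (le_max_left _ _) ENNReal.toReal_nonneg)
      · have hmono : (ℙ {ω | s0 < ξ 0 ω}).toReal ≤ (ℙ {ω | v < ξ 0 ω}).toReal := by
          refine ENNReal.toReal_mono (measure_ne_top _ _)
            (measure_mono fun ω hω => lt_trans hcase hω)
        have h1 := hM v ⟨hv, le_of_lt hcase⟩
        have h2 : M ≤ K * (ℙ {ω | v < ξ 0 ω}).toReal := by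
          have hMeq : M = (M / (ℙ {ω | s0 < ξ 0 ω}).toReal) * (ℙ {ω | s0 < ξ 0 ω}).toReal := by
            rw [div_mul_cancel₀ _ (ne_of_gt hτpos)]
          calc M = (M / (ℙ {ω | s0 < ξ 0 ω}).toReal) * (ℙ {ω | s0 < ξ 0 ω}).toReal := hMeq
            _ ≤ K * (ℙ {ω | s0 < ξ 0 ω}).toReal :=
              mul_le_mul_of_nonneg_right (le_max_right _ _) ENNReal.toReal_nonneg
            _ ≤ K * (ℙ {ω | v < ξ 0 ω}).toReal := mul_le_mul_of_nonneg_left hmono hK0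
        exact h1.trans h2
    have hlin : ∫⁻ ω, ENNReal.ofReal |X 0 v ω| ^ e ∂ℙ
        = ENNReal.ofReal (∫ ω, |X 0 v ω| ^ e ∂ℙ) := by
      rw [ofReal_integral_eq_lintegral_ofReal (hint e v hv)
        (Filter.Eventually.of_forall fun ω => pow_nonneg (abs_nonneg _) e)]
      exact lintegral_congr fun ω => (ENNReal.ofReal_pow (abs_nonneg _) e).symm
    rw [hlin]
    calc ENNReal.ofReal (∫ ω, |X 0 v ω| ^ e ∂ℙ)
        ≤ ENNReal.ofReal (K * (ℙ {ω | v < ξ 0 ω}).toReal) := ENNReal.ofReal_le_ofReal hreal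
      _ = ENNReal.ofReal K * ENNReal.ofReal ((ℙ {ω | v < ξ 0 ω}).toReal) :=
          ENNReal.ofReal_mul hK0
      _ = ENNReal.ofReal K * ℙ {ω | v < ξ 0 ω} := by
          rw [ENNReal.ofReal_toReal (measure_ne_top _ _)]
  -- Step 2: chi sums to at most one a.e.
  have hξae : ∀ᵐ ω ∂ℙ, ∀ j : ℕ, 0 < ξ j ω := (ae_all_iff).2 hξpos
  have hchi : ∀ t : ℝ, ∀ᵐ ω ∂ℙ,
      (∑' k : ℕ, (if rwa' ξ k ω ≤ t ∧ t < rwa' ξ (k + 1) ω then (1 : ℝ≥0∞) else 0)) ≤ 1 := by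
    intro t
    refine hξae.mono fun ω hω => ?_
    have hmono : ∀ {a b : ℕ}, a ≤ b → rwa' ξ a ω ≤ rwa' ξ b ω := by
      intro a b hab
      exact Finset.sum_le_sum_of_subset_of_nonneg (Finset.range_subset_range.2 hab)
        fun i _ _ => le_of_lt (hω i)
    by_cases hex : ∃ k0 : ℕ,
        (if rwa' ξ k0 ω ≤ t ∧ t < rwa' ξ (k0 + 1) ω then (1 : ℝ≥0∞) else 0) ≠ 0
    · obtain ⟨k0, hk0⟩ := hex
      have hk0' : rwa' ξ k0 ω ≤ t ∧ t < rwa' ξ (k0 + 1) ω := by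
        by_contra h
        rw [if_neg h] at hk0
        exact hk0 rfl
      rw [tsum_eq_single k0 ?_]
      · split <;> simp
      · intro b hb
        rcases lt_or_gt_of_ne hb with h | h
        · exact if_neg fun hc =>
            absurd hc.2 (not_lt.2 ((hmono (Nat.succ_le_of_lt h)).trans hk0'.1))
        · exact if_neg fun hc =>
            absurd hc.1 (not_le.2 (lt_of_lt_of_le hk0'.2 (hmono h)))
    · push_neg at hex
      calc (∑' k : ℕ, (if rwa' ξ k ω ≤ t ∧ t < rwa' ξ (k + 1) ω then (1 : ℝ≥0∞) else 0))
          = ∑' _ : ℕ, (0 : ℝ≥0∞) := tsum_congr hex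
        _ = 0 := tsum_zero
        _ ≤ 1 := zero_le_one
  -- Step 3: key bound
  obtain ⟨D, hDtop, hKEY⟩ := key_bound X ξ hmX hmξ hindep hident
    (fun e he => hmom e he) hchi l
  have hmrw : ∀ j : ℕ, Measurable (rwa' ξ j) := fun j => Finset.measurable_sum _ fun i _ => hmξ i
  -- Step 4: final bound for each t
  have hfinal : ∀ t : ℝ,
      (∫ ω, |∑' k : ℕ, if rwa' ξ k ω ≤ t then X k (t - rwa' ξ k ω) ω else 0| ^ l ∂ℙ)
        ≤ D.toReal := by
    intro t
    have hpathae : ∀ᵐ ω ∂ℙ, ∀ k : ℕ, ∀ u : ℝ, ContinuousWithinAt (fun s => X k s ω) (Ici u) u :=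
      (ae_all_iff).2 fun k => (hpath k).mono fun ω h => h
    have hlint : ∫⁻ ω, ENNReal.ofReal
        (|∑' k : ℕ, if rwa' ξ k ω ≤ t then X k (t - rwa' ξ k ω) ω else 0| ^ l) ∂ℙ ≤ D := by
      have hpt : ∀ ω, ENNReal.ofReal
          (|∑' k : ℕ, if rwa' ξ k ω ≤ t then X k (t - rwa' ξ k ω) ω else 0| ^ l)
          ≤ (∑' k : ℕ, (if rwa' ξ k ω ≤ t then
              ENNReal.ofReal |X k (t - rwa' ξ k ω) ω| else 0)) ^ l := by
        intro ω
        rw [ENNReal.ofReal_pow (abs_nonneg _)]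
        refine pow_le_pow_left' ?_ l
        by_cases hsm : Summable (fun k : ℕ =>
            if rwa' ξ k ω ≤ t then X k (t - rwa' ξ k ω) ω else 0)
        · have hsm' : Summable (fun k : ℕ =>
              |if rwa' ξ k ω ≤ t then X k (t - rwa' ξ k ω) ω else 0|) := hsm.abs
          calc ENNReal.ofReal |∑' k : ℕ, if rwa' ξ k ω ≤ t then X k (t - rwa' ξ k ω) ω else 0|
              ≤ ENNReal.ofReal (∑' k : ℕ,
                  |if rwa' ξ k ω ≤ t then X k (t - rwa' ξ k ω) ω else 0|) := by
                refine ENNReal.ofReal_le_ofReal ?_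
                have hns := norm_tsum_le_tsum_norm (f := fun k : ℕ =>
                    if rwa' ξ k ω ≤ t then X k (t - rwa' ξ k ω) ω else 0)
                  (by simpa [Real.norm_eq_abs] using hsm')
                simpa [Real.norm_eq_abs] using hns
            _ = ∑' k : ℕ, ENNReal.ofReal
                  |if rwa' ξ k ω ≤ t then X k (t - rwa' ξ k ω) ω else 0| :=
                ENNReal.ofReal_tsum_of_nonneg (fun k => abs_nonneg _) hsm'
            _ = ∑' k : ℕ, (if rwa' ξ k ω ≤ t then
                  ENNReal.ofReal |X k (t - rwa' ξ k ω) ω| else 0) := by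
                refine tsum_congr fun k => ?_
                by_cases hc : rwa' ξ k ω ≤ t
                · rw [if_pos hc, if_pos hc]
                · rw [if_neg hc, if_neg hc]
                  simp
        · rw [tsum_eq_zero_of_not_summable hsm]
          simp
      have hg_lim : ∀ᵐ ω ∂ℙ,
          (∑' k : ℕ, (if rwa' ξ k ω ≤ t then
            ENNReal.ofReal |X k (t - rwa' ξ k ω) ω| else 0)) ^ l
          ≤ atTop.liminf (fun n : ℕ => (∑' k : ℕ, (if rwa' ξ k ω ≤ t then
              ENNReal.ofReal |X k (dy n (t - rwa' ξ k ω)) ω| else 0)) ^ l) := by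
        refine hpathae.mono fun ω hω => ?_
        have hconv : ∀ k : ℕ, Tendsto (fun n : ℕ => (if rwa' ξ k ω ≤ t then
            ENNReal.ofReal |X k (dy n (t - rwa' ξ k ω)) ω| else 0)) atTop
            (nhds (if rwa' ξ k ω ≤ t then ENNReal.ofReal |X k (t - rwa' ξ k ω) ω| else 0)) := by
          intro k
          by_cases hc : rwa' ξ k ω ≤ t
          · simp only [if_pos hc]
            have hu : Tendsto (fun n : ℕ => dy n (t - rwa' ξ k ω)) atTop
                (nhdsWithin (t - rwa' ξ k ω) (Ici (t - rwa' ξ k ω))) := by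
              rw [tendsto_nhdsWithin_iff]
              exact ⟨tendsto_dy _, Filter.Eventually.of_forall fun n => le_dy n _⟩
            have hX : Tendsto (fun n : ℕ => X k (dy n (t - rwa' ξ k ω)) ω) atTop
                (nhds (X k (t - rwa' ξ k ω) ω)) :=
              ((hω k (t - rwa' ξ k ω)).tendsto).comp hu
            exact (ENNReal.continuous_ofReal.tendsto _).comp
              ((continuous_abs.tendsto _).comp hX)
          · simp only [if_neg hc]
            exact tendsto_const_nhds
        have hle : (∑' k : ℕ, (if rwa' ξ k ω ≤ t then
            ENNReal.ofReal |X k (t - rwa' ξ k ω) ω| else 0))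
            = ∑' k : ℕ, atTop.liminf (fun n : ℕ => (if rwa' ξ k ω ≤ t then
                ENNReal.ofReal |X k (dy n (t - rwa' ξ k ω)) ω| else 0)) :=
          tsum_congr fun k => ((hconv k).liminf_eq).symm
        calc (∑' k : ℕ, (if rwa' ξ k ω ≤ t then
              ENNReal.ofReal |X k (t - rwa' ξ k ω) ω| else 0)) ^ l
            = (∑' k : ℕ, atTop.liminf (fun n : ℕ => (if rwa' ξ k ω ≤ t then
                ENNReal.ofReal |X k (dy n (t - rwa' ξ k ω)) ω| else 0))) ^ l := by rw [hle]
          _ ≤ (atTop.liminf (fun n : ℕ => ∑' k : ℕ, (if rwa' ξ k ω ≤ t then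
                ENNReal.ofReal |X k (dy n (t - rwa' ξ k ω)) ω| else 0))) ^ l :=
              pow_le_pow_left' (tsum_liminf_le _) l
          _ ≤ atTop.liminf (fun n : ℕ => (∑' k : ℕ, (if rwa' ξ k ω ≤ t then
                ENNReal.ofReal |X k (dy n (t - rwa' ξ k ω)) ω| else 0)) ^ l) := by
              have hmonopow : Monotone (fun x : ℝ≥0∞ => x ^ l) :=
                fun a b h => pow_le_pow_left' h l
              exact (hmonopow.map_liminf_of_continuousAt _
                ((ENNReal.continuous_pow l).continuousAt)).le
      calc ∫⁻ ω, ENNReal.ofReal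
            (|∑' k : ℕ, if rwa' ξ k ω ≤ t then X k (t - rwa' ξ k ω) ω else 0| ^ l) ∂ℙ
          ≤ ∫⁻ ω, (∑' k : ℕ, (if rwa' ξ k ω ≤ t then
              ENNReal.ofReal |X k (t - rwa' ξ k ω) ω| else 0)) ^ l ∂ℙ := lintegral_mono hpt
        _ ≤ ∫⁻ ω, atTop.liminf (fun n : ℕ => (∑' k : ℕ, (if rwa' ξ k ω ≤ t then
              ENNReal.ofReal |X k (dy n (t - rwa' ξ k ω)) ω| else 0)) ^ l) ∂ℙ :=
            lintegral_mono_ae hg_lim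
        _ ≤ atTop.liminf (fun n : ℕ => ∫⁻ ω, (∑' k : ℕ, (if rwa' ξ k ω ≤ t then
              ENNReal.ofReal |X k (dy n (t - rwa' ξ k ω)) ω| else 0)) ^ l ∂ℙ) :=
            lintegral_liminf_le fun n => (Measurable.ennreal_tsum fun k =>
              measurable_ite_dy (fun q => hmX k q) (hmrw k) n t).pow_const l
        _ ≤ atTop.liminf (fun _ : ℕ => D) :=
            Filter.liminf_le_liminf (Filter.Eventually.of_forall fun n => hKEY t n)
        _ = D := Filter.liminf_const D
    have hnn : 0 ≤ ∫ ω, |∑' k : ℕ, if rwa' ξ k ω ≤ t then X k (t - rwa' ξ k ω) ω else 0| ^ l ∂ℙ :=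
      integral_nonneg fun ω => pow_nonneg (abs_nonneg _) l
    have h1 := MeasureTheory.norm_integral_le_lintegral_norm (μ := ℙ)
      (f := fun ω => |∑' k : ℕ, if rwa' ξ k ω ≤ t then X k (t - rwa' ξ k ω) ω else 0| ^ l)
    rw [Real.norm_eq_abs, abs_of_nonneg hnn] at h1
    refine h1.trans (ENNReal.toReal_mono hDtop ?_)
    calc ∫⁻ ω, ENNReal.ofReal
          ‖|∑' k : ℕ, if rwa' ξ k ω ≤ t then X k (t - rwa' ξ k ω) ω else 0| ^ l‖ ∂ℙ
        = ∫⁻ ω, ENNReal.ofReal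
          (|∑' k : ℕ, if rwa' ξ k ω ≤ t then X k (t - rwa' ξ k ω) ω else 0| ^ l) ∂ℙ := by
          refine lintegral_congr fun ω => ?_
          rw [Real.norm_eq_abs, abs_of_nonneg (pow_nonneg (abs_nonneg _) l)]
      _ ≤ D := hlint
  rw [Asymptotics.isBigO_iff]
  refine ⟨D.toReal, Filter.Eventually.of_forall fun t => ?_⟩
  rw [norm_one, mul_one, Real.norm_eq_abs,
    abs_of_nonneg (integral_nonneg fun ω => pow_nonneg (abs_nonneg _) l)]
  exact hfinal t

end Stmt14

open Stmt14 in
theorem statement14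
    {Ω : Type*} [MeasureSpace Ω] [IsProbabilityMeasure (ℙ : Measure Ω)]
    (X : ℕ → ℝ → Ω → ℝ) (ξ : ℕ → Ω → ℝ)
    (hmX : ∀ k t, Measurable (X k t))
    (hmξ : ∀ k, Measurable (ξ k))
    (hξpos : ∀ k, ∀ᵐ ω ∂ℙ, 0 < ξ k ω)
    (hpath : ∀ k, ∀ᵐ ω ∂ℙ, Cadlag (fun t => X k t ω))
    (hindep : iIndepFun (m := fun _ : ℕ => (inferInstance : MeasurableSpace ((ℝ → ℝ) × ℝ)))
      (fun k ω => ((fun t => X k t ω), ξ k ω)) ℙ)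
    (hident : ∀ k : ℕ, IdentDistrib (fun ω => ((fun t => X k t ω), ξ k ω))
      (fun ω => ((fun t => X 0 t ω), ξ 0 ω)) ℙ ℙ)
    (α : ℝ) (hα : 0 < α ∧ α < 1) (ℓξ : ℝ → ℝ) (hℓξ : SlowlyVarying ℓξ)
    (hA1 : Tendsto (fun t => (ℙ {ω | t < ξ 0 ω}).toReal / (t ^ (-α) * ℓξ t)) atTop (nhds 1))
    (hint : ∀ (l : ℕ) (t : ℝ), 0 ≤ t → Integrable (fun ω => |X 0 t ω| ^ l) ℙ)
    (hmomO : ∀ l : ℕ, 1 ≤ l →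
      (fun t => ∫ ω, |X 0 t ω| ^ l ∂ℙ) =O[atTop] (fun t => (ℙ {ω | t < ξ 0 ω}).toReal))
    (hmomloc : ∀ l : ℕ, 1 ≤ l → ∀ T > (0:ℝ), ∃ M : ℝ, ∀ t ∈ Icc (0:ℝ) T,
      (∫ ω, |X 0 t ω| ^ l ∂ℙ) ≤ M) :
    ∀ l : ℕ, 1 ≤ l →
      (fun t => ∫ ω,
          |∑' k : ℕ, if rw ξ k ω ≤ t then X k (t - rw ξ k ω) ω else 0| ^ l ∂ℙ)
        =O[atTop] (fun _ => (1 : ℝ)) := by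
  intro l hl
  exact Stmt14.main_test X ξ hmX hmξ hξpos (fun k => (hpath k).mono fun ω h => h.1)
    hindep hident α hα ℓξ hA1 hint hmomO hmomloc l hl
end
end

section
/- Define f:[0,∞)→ℝ by f(t) = 1 + (−1)^{⌊t⌋}/log⌊t⌋ for t ≥ 2 and f(t) = 1 for 0 ≤ t < 2, where ⌊t⌋ is the integer part of t. Then f(t) → 1 as t→∞ (so f is regularly varying at infinity of index ρ = 0), yet for every δ ∈ (0,1] and every integer n ≥ 2, sup_{y∈[0,δ)} |f(2n) − f(2n−y)| ≥ 2/log(2n). Consequently there is no ε > 0 with sup_{y∈[0,δ)} |f(t) − f(t−y)| = O(t^{−ε}) as t→∞; i.e. a regularly varying function need not satisfy the oscillation condition sup_{y∈[0,δ)}|f(t)−f(t−y)| = O(t^{ρ−ε}). -/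
open MeasureTheory ProbabilityTheory Filter Topology Set Asymptotics

noncomputable section

lemma logfloor_pos {t : ℝ} (ht : 2 ≤ t) : 0 < Real.log (⌊t⌋ : ℝ) := by
  have h2 : (2 : ℤ) ≤ ⌊t⌋ := by exact_mod_cast Int.le_floor.mpr (by exact_mod_cast ht)
  have : (2:ℝ) ≤ (⌊t⌋ : ℝ) := by exact_mod_cast h2
  exact Real.log_pos (by linarith)

lemma f_bound (f : ℝ → ℝ)
    (hf : ∀ t : ℝ, f t = if t < 2 then 1 else 1 + (-1 : ℝ) ^ ⌊t⌋ / Real.log (⌊t⌋ : ℝ)) 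
    (t : ℝ) : |f t - 1| ≤ 1 / Real.log 2 := by
  rw [hf t]
  split_ifs with h
  · simp; positivity
  · push_neg at h
    have hl := logfloor_pos h
    have h2 : (2:ℝ) ≤ (⌊t⌋ : ℝ) := by
      exact_mod_cast Int.le_floor.mpr (by exact_mod_cast h)
    have hl2 : Real.log 2 ≤ Real.log (⌊t⌋:ℝ) := Real.log_le_log (by norm_num) h2
    have hz : |(-1 : ℝ) ^ ⌊t⌋| = 1 := by
      rcases Int.even_or_odd ⌊t⌋ with he | ho
      · rw [he.neg_one_zpow]; norm_num
      · rw [ho.neg_one_zpow]; norm_num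
    rw [add_sub_cancel_left, abs_div, hz, abs_of_pos hl]
    exact one_div_le_one_div_of_le (Real.log_pos (by norm_num)) hl2

lemma f_tendsto (f : ℝ → ℝ)
    (hf : ∀ t : ℝ, f t = if t < 2 then 1 else 1 + (-1 : ℝ) ^ ⌊t⌋ / Real.log (⌊t⌋ : ℝ)) :
    Tendsto f atTop (nhds 1) := by
  have key : Tendsto (fun t => f t - 1) atTop (nhds 0) := by
    apply squeeze_zero_norm' (a := fun t => 1 / Real.log (t - 1))
    · filter_upwards [eventually_ge_atTop (3:ℝ)] with t ht
      have h2 : (2:ℝ) ≤ t := by linarith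
      rw [hf t, if_neg (by linarith)]
      have hfl : t - 1 ≤ (⌊t⌋ : ℝ) := (Int.sub_one_lt_floor t).le
      have hl := logfloor_pos h2
      have hl1 : 0 < Real.log (t - 1) := Real.log_pos (by linarith)
      have hle : Real.log (t-1) ≤ Real.log (⌊t⌋:ℝ) := Real.log_le_log (by linarith) hfl
      have hz : |(-1 : ℝ) ^ ⌊t⌋| = 1 := by
        rcases Int.even_or_odd ⌊t⌋ with he | ho
        · rw [he.neg_one_zpow]; norm_num
        · rw [ho.neg_one_zpow]; norm_num
      rw [add_sub_cancel_left]
      rw [Real.norm_eq_abs, abs_div, hz, abs_of_pos hl]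
      exact one_div_le_one_div_of_le hl1 hle
    · have : Tendsto (fun t : ℝ => Real.log (t - 1)) atTop atTop :=
        Real.tendsto_log_atTop.comp (tendsto_atTop_add_const_right _ (-1) tendsto_id)
      simpa [Pi.inv_def] using this.inv_tendsto_atTop
  have := key.add_const 1
  simpa using this

lemma f_gap (f : ℝ → ℝ)
    (hf : ∀ t : ℝ, f t = if t < 2 then 1 else 1 + (-1 : ℝ) ^ ⌊t⌋ / Real.log (⌊t⌋ : ℝ))
    (δ : ℝ) (hδ0 : 0 < δ) (hδ1 : δ ≤ 1) (n : ℕ) (hn : 2 ≤ n) :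
    2 / Real.log (2 * (n : ℝ)) ≤
      ⨆ y ∈ Ico (0:ℝ) δ, |f (2 * (n : ℝ)) - f (2 * (n : ℝ) - y)| := by
  set t := 2 * (n : ℝ) with ht
  have hn4 : (4:ℝ) ≤ t := by
    have : (2:ℝ) ≤ (n:ℝ) := by exact_mod_cast hn
    simp [ht]; linarith
  set y0 := δ / 2 with hy0
  have hy0pos : 0 < y0 := by positivity
  have hy0lt : y0 < δ := by linarith
  have hy0le : y0 < 1 := by linarith
  -- floor computations
  have hfte : ⌊t⌋ = (2 * n : ℤ) := by
    have hc : ((2 * n : ℤ) : ℝ) = t := by push_cast [ht]; ring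
    rw [← hc, Int.floor_intCast]
  have hfto : ⌊t - y0⌋ = (2 * n - 1 : ℤ) := by
    rw [Int.floor_eq_iff]
    constructor
    · push_cast; linarith
    · push_cast; linarith
  have hft : f t = 1 + 1 / Real.log t := by
    rw [hf t, if_neg (by linarith), hfte]
    have : Even (2 * (n:ℤ)) := ⟨n, by ring⟩
    rw [this.neg_one_zpow]
    push_cast; rw [ht]
  have hlt1 : (3:ℝ) ≤ t - 1 := by linarith
  have hfty : f (t - y0) = 1 - 1 / Real.log (t - 1) := by
    rw [hf _, if_neg (by push_neg; linarith), hfto]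
    have : Odd (2 * (n:ℤ) - 1) := ⟨(n:ℤ) - 1, by ring⟩
    rw [this.neg_one_zpow]
    push_cast; rw [ht]; ring_nf
  have hlpos : 0 < Real.log (t - 1) := Real.log_pos (by linarith)
  have hlpos2 : 0 < Real.log t := Real.log_pos (by linarith)
  have hgap : 2 / Real.log t ≤ |f t - f (t - y0)| := by
    rw [hft, hfty]
    have hle : Real.log (t - 1) ≤ Real.log t := Real.log_le_log (by linarith) (by linarith)
    have h1 : 1 / Real.log t ≤ 1 / Real.log (t - 1) := one_div_le_one_div_of_le hlpos hle
    have : (1 + 1 / Real.log t) - (1 - 1 / Real.log (t-1)) = 1/Real.log t + 1/Real.log (t-1) := by ring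
    rw [this, abs_of_pos (by positivity)]
    have : 2 / Real.log t = 1/Real.log t + 1/Real.log t := by ring
    linarith
  -- now the sup
  have hbdd : BddAbove (range fun y => ⨆ (_ : y ∈ Ico (0:ℝ) δ), |f t - f (t - y)|) := by
    refine ⟨2 / Real.log 2 + 1, ?_⟩
    rintro x ⟨y, rfl⟩
    rcases Classical.em (y ∈ Ico (0:ℝ) δ) with hm | hm
    · simp only []
      rw [ciSup_pos hm]
      have b1 := f_bound f hf t
      have b2 := f_bound f hf (t - y)
      have : |f t - f (t - y)| ≤ |f t - 1| + |f (t-y) - 1| := by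
        have := abs_sub (f t - 1) (f (t - y) - 1)
        calc |f t - f (t-y)| = |(f t - 1) - (f (t-y) - 1)| := by ring_nf
          _ ≤ |f t - 1| + |f (t-y) - 1| := abs_sub _ _
      have hl2 : 0 < Real.log 2 := Real.log_pos (by norm_num)
      have : |f t - f (t - y)| ≤ 2 / Real.log 2 := by
        calc |f t - f (t-y)| ≤ |f t - 1| + |f (t-y) - 1| := this
          _ ≤ 1/Real.log 2 + 1/Real.log 2 := add_le_add b1 b2
          _ = 2 / Real.log 2 := by ring
      linarith
    · simp only []
      have he : (⨆ (_ : y ∈ Ico 0 δ), |f t - f (t - y)|) = 0 := by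
        haveI : IsEmpty (y ∈ Ico 0 δ) := ⟨hm⟩
        exact (iSup_of_empty' _).trans Real.sSup_empty
      rw [he]
      have hl2 : 0 < Real.log 2 := Real.log_pos (by norm_num)
      positivity
  refine le_ciSup_of_le hbdd y0 ?_
  rw [ciSup_pos (show y0 ∈ Ico (0:ℝ) δ from ⟨hy0pos.le, hy0lt⟩)]
  exact hgap


theorem statement18
    (f : ℝ → ℝ)
    (hf : ∀ t : ℝ, f t =
      if t < 2 then 1 else 1 + (-1 : ℝ) ^ ⌊t⌋ / Real.log (⌊t⌋ : ℝ)) :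
    Tendsto f atTop (nhds 1) ∧
    (∀ δ : ℝ, 0 < δ → δ ≤ 1 → ∀ n : ℕ, 2 ≤ n →
      2 / Real.log (2 * (n : ℝ)) ≤
        ⨆ y ∈ Ico (0:ℝ) δ, |f (2 * (n : ℝ)) - f (2 * (n : ℝ) - y)|) ∧
    (∀ δ : ℝ, 0 < δ → δ ≤ 1 →
      ¬ ∃ ε : ℝ, 0 < ε ∧
        (fun t => ⨆ y ∈ Ico (0:ℝ) δ, |f t - f (t - y)|) =O[atTop]
          (fun t : ℝ => t ^ (-ε))) := by
  refine ⟨f_tendsto f hf, f_gap f hf, ?_⟩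
  rintro δ hδ0 hδ1 ⟨ε, hε, hO⟩
  obtain ⟨C, hC⟩ := hO.bound
  set C' : ℝ := max C 1 with hC'
  have hC'pos : 0 < C' := lt_of_lt_of_le one_pos (le_max_right _ _)
  have hlo := (isLittleO_log_rpow_atTop hε).def (by positivity : (0:ℝ) < 1/C')
  -- pick a large n
  rw [eventually_atTop] at hC hlo
  obtain ⟨T1, hT1⟩ := hC
  obtain ⟨T2, hT2⟩ := hlo
  set N : ℕ := max 2 (max ⌈T1⌉₊ ⌈T2⌉₊) with hN
  have hN2 : 2 ≤ N := le_max_left _ _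
  set t : ℝ := 2 * (N : ℝ) with htd
  have hNt : (N : ℝ) ≤ t := by
    have : (0:ℝ) ≤ (N:ℝ) := Nat.cast_nonneg _
    rw [htd]; linarith
  have ht1 : T1 ≤ t := le_trans (le_trans (Nat.le_ceil _) (by exact_mod_cast le_trans (le_max_left _ _) (le_max_right 2 _))) hNt
  have ht2 : T2 ≤ t := le_trans (le_trans (Nat.le_ceil _) (by exact_mod_cast le_trans (le_max_right _ _) (le_max_right 2 _))) hNt
  have ht4 : (4:ℝ) ≤ t := by
    have : (2:ℝ) ≤ (N:ℝ) := by exact_mod_cast hN2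
    rw [htd]; linarith
  have hlogpos : 0 < Real.log t := Real.log_pos (by linarith)
  have htpow : (0:ℝ) < t ^ ε := Real.rpow_pos_of_pos (by linarith) ε
  -- lower bound from part 2
  have hlow := f_gap f hf δ hδ0 hδ1 N hN2
  -- upper bound from O
  have hup := hT1 t ht1
  have hlog := hT2 t ht2
  -- chain
  have hnorm : ‖t ^ (-ε)‖ = t ^ (-ε) := by
    rw [Real.norm_eq_abs, abs_of_pos (Real.rpow_pos_of_pos (by linarith) _)]
  have h1 : 2 / Real.log t ≤ C' * t ^ (-ε) := by
    calc 2 / Real.log t ≤ ⨆ y ∈ Ico (0:ℝ) δ, |f t - f (t - y)| := hlow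
      _ ≤ ‖⨆ y ∈ Ico (0:ℝ) δ, |f t - f (t - y)|‖ := Real.le_norm_self _
      _ ≤ C * ‖t ^ (-ε)‖ := hup
      _ ≤ C' * t ^ (-ε) := by
          rw [hnorm]
          exact mul_le_mul_of_nonneg_right (le_max_left _ _) (Real.rpow_pos_of_pos (by linarith) _).le
  have h2 : C' * Real.log t ≤ t ^ ε := by
    have := hlog
    rw [Real.norm_eq_abs, abs_of_pos hlogpos, Real.norm_eq_abs,
      abs_of_pos htpow] at this
    calc C' * Real.log t ≤ C' * ((1/C') * t ^ ε) := by
          exact mul_le_mul_of_nonneg_left this hC'pos.le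
      _ = t ^ ε := by field_simp
  -- derive contradiction
  have hneg : t ^ (-ε) = (t ^ ε)⁻¹ := by
    rw [Real.rpow_neg (by linarith)]
  have h3 : 2 * t ^ ε ≤ C' * Real.log t := by
    rw [hneg] at h1
    have := (div_le_iff₀ hlogpos).mp h1
    -- 2 ≤ C' * (t^ε)⁻¹ * log t
    have h4 : 2 * t ^ ε ≤ C' * (t ^ ε)⁻¹ * Real.log t * t ^ ε := by nlinarith
    calc 2 * t ^ ε ≤ C' * (t ^ ε)⁻¹ * Real.log t * t ^ ε := h4
      _ = C' * Real.log t := by field_simp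
  nlinarith
end
end

section
/- Let f:[0,∞)→ℝ be differentiable with derivative f′ monotone on [t₀,∞) for some t₀ ≥ 0, and suppose f(t) ~ t^ρ ℓ(t) as t→∞ for some ρ ∈ ℝ and slowly varying ℓ. Then for every δ > 0 there exists ε > 0 such that sup_{y∈[0,δ)} |f(t) − f(t−y)| = O(t^{ρ−ε}) as t→∞. (This follows from the mean value theorem together with the monotone density theorem for regularly varying functions.) -/
open MeasureTheory ProbabilityTheory Filter Topology Set Asymptotics

noncomputable section

lemma aux_fpos (f : ℝ → ℝ) (ρ : ℝ) (ℓ : ℝ → ℝ)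
    (hℓpos : ∀ t > (0:ℝ), 0 < ℓ t)
    (hreg : Tendsto (fun t => f t / (t ^ ρ * ℓ t)) atTop (nhds 1)) :
    ∀ᶠ t in atTop, 0 < f t := by
  have h1 : ∀ᶠ t in atTop, (0:ℝ) < f t / (t ^ ρ * ℓ t) :=
    hreg.eventually (eventually_gt_nhds (by norm_num))
  filter_upwards [h1, eventually_gt_atTop (0:ℝ)] with t ht ht0
  have hp : 0 < t ^ ρ * ℓ t := mul_pos (Real.rpow_pos_of_pos ht0 ρ) (hℓpos t ht0)
  have := mul_pos ht hp
  rwa [div_mul_cancel₀] at this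
  exact ne_of_gt hp

lemma aux_ratio (f : ℝ → ℝ) (ρ : ℝ) (ℓ : ℝ → ℝ) (hℓ : SlowlyVarying ℓ)
    (hℓpos : ∀ t > (0:ℝ), 0 < ℓ t)
    (hreg : Tendsto (fun t => f t / (t ^ ρ * ℓ t)) atTop (nhds 1))
    (lam : ℝ) (hlam : 0 < lam) :
    Tendsto (fun t => f (lam * t) / f t) atTop (𝓝 (lam ^ ρ)) := by
  have hfpos := aux_fpos f ρ ℓ hℓpos hreg
  have hmul : Tendsto (fun t : ℝ => lam * t) atTop atTop :=
    Tendsto.const_mul_atTop hlam tendsto_id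
  have h1 : Tendsto (fun t => f (lam * t) / ((lam * t) ^ ρ * ℓ (lam * t))) atTop (𝓝 1) :=
    hreg.comp hmul
  have h2 := hℓ lam hlam
  have h3 : Tendsto (fun t => (t ^ ρ * ℓ t) / f t) atTop (𝓝 1) := by
    have := hreg.inv₀ one_ne_zero
    simp only [inv_div, inv_one] at this
    exact this
  have h4 : Tendsto (fun t =>
      (f (lam * t) / ((lam * t) ^ ρ * ℓ (lam * t))) * (ℓ (lam * t) / ℓ t)
        * ((t ^ ρ * ℓ t) / f t) * lam ^ ρ) atTop (𝓝 (1 * 1 * 1 * lam ^ ρ)) :=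
    (((h1.mul h2).mul h3).mul tendsto_const_nhds)
  rw [one_mul, one_mul, one_mul] at h4
  refine h4.congr' ?_
  filter_upwards [hfpos, eventually_gt_atTop (0:ℝ)] with t hf ht0
  have hlt0 : 0 < lam * t := mul_pos hlam ht0
  have hl1 : ℓ (lam * t) ≠ 0 := ne_of_gt (hℓpos _ hlt0)
  have hl2 : ℓ t ≠ 0 := ne_of_gt (hℓpos _ ht0)
  have hr1 : (lam * t) ^ ρ ≠ 0 := ne_of_gt (Real.rpow_pos_of_pos hlt0 ρ)
  have hr2 : (t:ℝ) ^ ρ ≠ 0 := ne_of_gt (Real.rpow_pos_of_pos ht0 ρ)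
  have hf0 : f t ≠ 0 := ne_of_gt hf
  have hml : (lam * t) ^ ρ = lam ^ ρ * t ^ ρ := Real.mul_rpow hlam.le ht0.le
  field_simp
  rw [hml]; ring

lemma aux_lam (ρ : ℝ) : ∃ lam : ℝ, 1 < lam ∧
    (lam ^ ρ - 1) / (lam - 1) < ρ + 1/8 ∧
    (1 - lam⁻¹ ^ ρ) / (1 - lam⁻¹) < ρ + 1/8 := by
  have hd : HasDerivAt (fun x : ℝ => x ^ ρ) (ρ * (1:ℝ) ^ (ρ - 1)) 1 :=
    Real.hasDerivAt_rpow_const (Or.inl one_ne_zero)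
  rw [Real.one_rpow, mul_one] at hd
  rw [hasDerivAt_iff_tendsto_slope] at hd
  have hev : ∀ᶠ x in 𝓝[≠] (1:ℝ), slope (fun x : ℝ => x ^ ρ) 1 x < ρ + 1/8 :=
    hd.eventually (eventually_lt_nhds (by linarith))
  rw [eventually_nhdsWithin_iff, Metric.eventually_nhds_iff] at hev
  obtain ⟨η, hη, hball⟩ := hev
  set d : ℝ := min η 1 / 2 with hd'
  have hd0 : 0 < d := by positivity
  have hdη : d < η := by
    have h := min_le_left η 1
    rw [hd']; linarith
  refine ⟨1 + d, by linarith, ?_, ?_⟩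
  · have h1 : dist (1 + d) (1:ℝ) < η := by
      rw [Real.dist_eq]; rw [abs_of_nonneg (by linarith)]; simpa using hdη
    have := hball h1 (by simp [mem_compl_singleton_iff]; linarith)
    rw [slope_def_field, Real.one_rpow] at this
    convert this using 2 <;> ring
  · set lam : ℝ := 1 + d
    have hlam1 : 1 < lam := by simp [lam]; linarith
    have hinv1 : lam⁻¹ < 1 := inv_lt_one_of_one_lt₀ hlam1
    have hinv0 : 0 < lam⁻¹ := by positivity
    have h1 : dist lam⁻¹ (1:ℝ) < η := by
      rw [Real.dist_eq, abs_of_nonpos (by linarith)]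
      have : 1 - lam⁻¹ = (lam - 1) / lam := by field_simp
      rw [neg_sub, this]
      calc (lam - 1)/lam < lam - 1 := by
            apply div_lt_self (by linarith) hlam1
        _ = d := by simp [lam]
        _ < η := hdη
    have := hball h1 (by simp [mem_compl_singleton_iff]; intro h; rw [h] at hinv1; linarith)
    rw [slope_def_field, Real.one_rpow] at this
    have heq : (lam⁻¹ ^ ρ - 1) / (lam⁻¹ - 1) = (1 - lam⁻¹ ^ ρ) / (1 - lam⁻¹) := by
      rw [← neg_sub (1:ℝ) (lam⁻¹ ^ ρ), ← neg_sub (1:ℝ) lam⁻¹, neg_div_neg_eq]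
    rw [heq] at this
    exact this

lemma aux_mvt (f : ℝ → ℝ) (hdiff : ∀ t ≥ (0:ℝ), DifferentiableAt ℝ f t) {a b : ℝ}
    (h0 : 0 ≤ a) (hab : a < b) : ∃ c ∈ Ioo a b, deriv f c = (f b - f a) / (b - a) := by
  apply exists_deriv_eq_slope f hab
  · intro x hx
    exact (hdiff x (h0.trans hx.1)).continuousAt.continuousWithinAt
  · intro x hx
    exact (hdiff x (h0.trans hx.1.le)).differentiableWithinAt

set_option maxHeartbeats 2000000 in
lemma aux_derivbound (f : ℝ → ℝ) (ρ : ℝ) (ℓ : ℝ → ℝ) (hℓ : SlowlyVarying ℓ)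
    (hℓpos : ∀ t > (0:ℝ), 0 < ℓ t)
    (hdiff : ∀ t ≥ (0:ℝ), DifferentiableAt ℝ f t)
    (t₀ : ℝ) (ht₀ : 0 ≤ t₀)
    (hmono : MonotoneOn (deriv f) (Ici t₀) ∨ AntitoneOn (deriv f) (Ici t₀))
    (hreg : Tendsto (fun t => f t / (t ^ ρ * ℓ t)) atTop (nhds 1)) :
    ∃ K > (0:ℝ), ∀ᶠ t in atTop,
      deriv f t ≤ (ρ + 1/4) * (f t / t) ∧ -(K * (f t / t)) ≤ deriv f t := by
  obtain ⟨lam, hlam, hs1, hs2⟩ := aux_lam ρ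
  have hlam0 : (0:ℝ) < lam := by linarith
  have hinv0 : (0:ℝ) < lam⁻¹ := by positivity
  have hinv1 : lam⁻¹ < 1 := inv_lt_one_of_one_lt₀ hlam
  have hfpos := aux_fpos f ρ ℓ hℓpos hreg
  have hrat1 := aux_ratio f ρ ℓ hℓ hℓpos hreg lam hlam0
  have hrat2 := aux_ratio f ρ ℓ hℓ hℓpos hreg lam⁻¹ hinv0
  have hP : (0:ℝ) < lam⁻¹ ^ ρ := Real.rpow_pos_of_pos hinv0 ρ
  have hia : (0:ℝ) < (1 - lam⁻¹)⁻¹ := inv_pos.2 (by linarith)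
  have hib : (0:ℝ) < (lam - 1)⁻¹ := inv_pos.2 (by linarith)
  refine ⟨(lam⁻¹ ^ ρ + 1) * ((1 - lam⁻¹)⁻¹ + (lam - 1)⁻¹),
    mul_pos (by linarith) (by linarith), ?_⟩
  set K := (lam⁻¹ ^ ρ + 1) * ((1 - lam⁻¹)⁻¹ + (lam - 1)⁻¹) with hK
  have hK1 : lam⁻¹ ^ ρ + 1 ≤ K * (1 - lam⁻¹) := by
    rw [hK]
    have h1 : (lam⁻¹ ^ ρ + 1) * ((1 - lam⁻¹)⁻¹ * (1 - lam⁻¹)) = lam⁻¹ ^ ρ + 1 := by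
      rw [inv_mul_cancel₀ (by linarith)]; ring
    nlinarith [mul_pos (mul_pos (by linarith : (0:ℝ) < lam⁻¹ ^ ρ + 1) hib)
      (by linarith : (0:ℝ) < 1 - lam⁻¹)]
  have hK2 : (1:ℝ) ≤ K * (lam - 1) := by
    rw [hK]
    have h1 : (lam⁻¹ ^ ρ + 1) * ((lam - 1)⁻¹ * (lam - 1)) = lam⁻¹ ^ ρ + 1 := by
      rw [inv_mul_cancel₀ (by linarith)]; ring
    nlinarith [mul_pos (mul_pos (by linarith : (0:ℝ) < lam⁻¹ ^ ρ + 1) hia)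
      (by linarith : (0:ℝ) < lam - 1)]
  have hmul1 : Tendsto (fun t : ℝ => lam⁻¹ * t) atTop atTop :=
    Tendsto.const_mul_atTop hinv0 tendsto_id
  have hmul2 : Tendsto (fun t : ℝ => lam * t) atTop atTop :=
    Tendsto.const_mul_atTop hlam0 tendsto_id
  have E2 : ∀ᶠ t in atTop, 0 < f (lam * t) := hmul2.eventually hfpos
  have E3 : ∀ᶠ t in atTop, 0 < f (lam⁻¹ * t) := hmul1.eventually hfpos
  have E4 : ∀ᶠ t in atTop, f (lam * t) / f t < lam ^ ρ + (lam - 1)/8 :=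
    hrat1.eventually (eventually_lt_nhds (by linarith))
  have E5 : ∀ᶠ t in atTop, lam⁻¹ ^ ρ - (1 - lam⁻¹)/8 < f (lam⁻¹ * t) / f t :=
    hrat2.eventually (eventually_gt_nhds (by linarith))
  have E6 : ∀ᶠ t in atTop, f (lam⁻¹ * t) / f t < lam⁻¹ ^ ρ + 1 :=
    hrat2.eventually (eventually_lt_nhds (by linarith))
  filter_upwards [hfpos, E2, E3, E4, E5, E6, eventually_ge_atTop (lam * (t₀ + 1))]
    with t h1 h2 h3 h4 h5 h6 h7
  have htinv : t₀ + 1 ≤ lam⁻¹ * t := by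
    have := mul_le_mul_of_nonneg_left h7 hinv0.le
    rwa [← mul_assoc, inv_mul_cancel₀ (ne_of_gt hlam0), one_mul] at this
  have ht0 : (0:ℝ) < t := by nlinarith
  have htt₀ : t₀ ≤ t := by nlinarith
  have hd1 : (0:ℝ) < t - lam⁻¹ * t := by nlinarith
  have hd2 : (0:ℝ) < lam * t - t := by nlinarith
  -- upper bounds on numerators
  have hnum1 : f (lam * t) - f t ≤ (ρ + 1/4) * (lam - 1) * f t := by
    have h4' : f (lam * t) < (lam ^ ρ + (lam - 1)/8) * f t := (div_lt_iff₀ h1).mp h4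
    have hs1' : lam ^ ρ - 1 ≤ (ρ + 1/8) * (lam - 1) :=
      ((div_lt_iff₀ (by linarith : (0:ℝ) < lam - 1)).mp hs1).le
    have hco : lam ^ ρ + (lam - 1)/8 - 1 ≤ (ρ + 1/4) * (lam - 1) := by
      have he : (ρ + 1/8) * (lam - 1) + (lam - 1)/8 = (ρ + 1/4) * (lam - 1) := by ring
      linarith
    calc f (lam * t) - f t ≤ (lam ^ ρ + (lam - 1)/8) * f t - f t := by linarith
      _ = (lam ^ ρ + (lam - 1)/8 - 1) * f t := by ring
      _ ≤ ((ρ + 1/4) * (lam - 1)) * f t := mul_le_mul_of_nonneg_right hco h1.le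
      _ = (ρ + 1/4) * (lam - 1) * f t := by ring
  have hnum2 : f t - f (lam⁻¹ * t) ≤ (ρ + 1/4) * (1 - lam⁻¹) * f t := by
    have h5' : (lam⁻¹ ^ ρ - (1 - lam⁻¹)/8) * f t < f (lam⁻¹ * t) := (lt_div_iff₀ h1).mp h5
    have hs2' : 1 - lam⁻¹ ^ ρ ≤ (ρ + 1/8) * (1 - lam⁻¹) :=
      ((div_lt_iff₀ (by linarith : (0:ℝ) < 1 - lam⁻¹)).mp hs2).le
    have hco : 1 - lam⁻¹ ^ ρ + (1 - lam⁻¹)/8 ≤ (ρ + 1/4) * (1 - lam⁻¹) := by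
      have he : (ρ + 1/8) * (1 - lam⁻¹) + (1 - lam⁻¹)/8 = (ρ + 1/4) * (1 - lam⁻¹) := by ring
      linarith
    calc f t - f (lam⁻¹ * t) ≤ f t - (lam⁻¹ ^ ρ - (1 - lam⁻¹)/8) * f t := by linarith
      _ = (1 - lam⁻¹ ^ ρ + (1 - lam⁻¹)/8) * f t := by ring
      _ ≤ ((ρ + 1/4) * (1 - lam⁻¹)) * f t := mul_le_mul_of_nonneg_right hco h1.le
      _ = (ρ + 1/4) * (1 - lam⁻¹) * f t := by ring
  have hnum3 : -(K * (1 - lam⁻¹)) * f t ≤ f t - f (lam⁻¹ * t) := by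
    have h6' : f (lam⁻¹ * t) < (lam⁻¹ ^ ρ + 1) * f t := (div_lt_iff₀ h1).mp h6
    have hh := mul_le_mul_of_nonneg_right hK1 h1.le
    calc -(K * (1 - lam⁻¹)) * f t = f t - ((K * (1 - lam⁻¹)) * f t + f t) := by ring
      _ ≤ f t - (lam⁻¹ ^ ρ + 1) * f t := by
          have he : K * (1 - lam⁻¹) * f t = (K * (1 - lam⁻¹)) * f t := by ring
          linarith
      _ ≤ f t - f (lam⁻¹ * t) := by linarith
  have hnum4 : -(K * (lam - 1)) * f t ≤ f (lam * t) - f t := by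
    have hh := mul_le_mul_of_nonneg_right hK2 h1.le
    rw [one_mul] at hh
    calc -(K * (lam - 1)) * f t = -((K * (lam - 1)) * f t) := by ring
      _ ≤ -(f t) := by linarith
      _ ≤ f (lam * t) - f t := by linarith
  -- slope identities
  have hiden1 : (ρ + 1/4) * (f t / t) * (lam * t - t) = (ρ + 1/4) * (lam - 1) * f t := by
    field_simp
  have hiden2 : (ρ + 1/4) * (f t / t) * (t - lam⁻¹ * t) = (ρ + 1/4) * (1 - lam⁻¹) * f t := by
    field_simp
  have hiden3 : -(K * (f t / t)) * (t - lam⁻¹ * t) = -(K * (1 - lam⁻¹)) * f t := by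
    field_simp
  have hiden4 : -(K * (f t / t)) * (lam * t - t) = -(K * (lam - 1)) * f t := by
    field_simp
  obtain ⟨c₁, hc₁, hceq₁⟩ := aux_mvt f hdiff ht0.le (by linarith : t < lam * t)
  obtain ⟨c₂, hc₂, hceq₂⟩ := aux_mvt f hdiff (by positivity : (0:ℝ) ≤ lam⁻¹ * t)
    (by linarith : lam⁻¹ * t < t)
  have hmemt : t ∈ Ici t₀ := htt₀
  have hmemc₁ : c₁ ∈ Ici t₀ := by
    simp only [mem_Ici]; linarith [hc₁.1]
  have hmemc₂ : c₂ ∈ Ici t₀ := by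
    simp only [mem_Ici]; linarith [hc₂.1, htinv]
  rcases hmono with hm | hm
  · constructor
    · have : deriv f t ≤ deriv f c₁ := hm hmemt hmemc₁ hc₁.1.le
      rw [hceq₁] at this
      refine this.trans ?_
      rw [div_le_iff₀ hd2, hiden1]; exact hnum1
    · have : deriv f c₂ ≤ deriv f t := hm hmemc₂ hmemt hc₂.2.le
      rw [hceq₂] at this
      refine le_trans ?_ this
      rw [le_div_iff₀ hd1, hiden3]; exact hnum3
  · constructor
    · have : deriv f t ≤ deriv f c₂ := hm hmemc₂ hmemt hc₂.2.le
      rw [hceq₂] at this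
      refine this.trans ?_
      rw [div_le_iff₀ hd1, hiden2]; exact hnum2
    · have : deriv f c₁ ≤ deriv f t := hm hmemt hmemc₁ hc₁.1.le
      rw [hceq₁] at this
      refine le_trans ?_ this
      rw [le_div_iff₀ hd2, hiden4]; exact hnum4

lemma aux_gronwall (f : ℝ → ℝ) (hdiff : ∀ t ≥ (0:ℝ), DifferentiableAt ℝ f t)
    (c' T : ℝ) (hT : 0 < T)
    (hb : ∀ t ≥ T, deriv f t ≤ c' * (f t / t)) :
    ∀ t ≥ T, f t ≤ (f T * T ^ (-c')) * t ^ c' := by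
  set g := fun t : ℝ => f t * t ^ (-c') with hgdef
  have hdg : ∀ x ≥ T, HasDerivAt g
      (deriv f x * x ^ (-c') + f x * (-c' * x ^ (-c'-1))) x := by
    intro x hx
    have hx0 : (0:ℝ) < x := lt_of_lt_of_le hT hx
    have h1 : HasDerivAt (fun y : ℝ => y ^ (-c')) (-c' * x ^ (-c'-1)) x := by
      simpa using Real.hasDerivAt_rpow_const (p := -c') (Or.inl (ne_of_gt hx0))
    exact ((hdiff x hx0.le).hasDerivAt).mul h1
  have hanti : AntitoneOn g (Ici T) := by
    apply antitoneOn_of_deriv_nonpos (convex_Ici T)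
    · intro x hx
      exact ((hdg x hx).differentiableAt).continuousAt.continuousWithinAt
    · intro x hx
      rw [interior_Ici] at hx
      exact ((hdg x (le_of_lt hx)).differentiableAt).differentiableWithinAt
    · intro x hx
      rw [interior_Ici] at hx
      have hx0 : (0:ℝ) < x := lt_of_lt_of_le hT hx.le
      rw [(hdg x hx.le).deriv]
      have hbx := hb x hx.le
      have hp : (0:ℝ) < x ^ (-c') := Real.rpow_pos_of_pos hx0 _
      have hmul := mul_le_mul_of_nonneg_right hbx hp.le
      have heq : c' * (f x / x) * x ^ (-c') = f x * (c' * x ^ (-c'-1)) := by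
        rw [show (-c'-1 : ℝ) = -c' + (-1) by ring, Real.rpow_add hx0,
          Real.rpow_neg_one, div_eq_mul_inv]
        ring
      rw [heq] at hmul
      linarith
  intro t ht
  have ht0 : (0:ℝ) < t := lt_of_lt_of_le hT ht
  have hgt : g t ≤ g T := hanti (self_mem_Ici) ht ht
  have hp : (0:ℝ) < t ^ c' := Real.rpow_pos_of_pos ht0 _
  have hmul := mul_le_mul_of_nonneg_right hgt hp.le
  have hcancel : f t * t ^ (-c') * t ^ c' = f t := by
    rw [Real.rpow_neg ht0.le, mul_assoc, inv_mul_cancel₀ (ne_of_gt hp), mul_one]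
  rw [hgdef] at hmul
  simp only at hmul
  rw [hcancel] at hmul
  linarith [hmul]

set_option maxHeartbeats 2000000 in
theorem statement19
    (f : ℝ → ℝ) (ρ : ℝ) (ℓ : ℝ → ℝ) (hℓ : SlowlyVarying ℓ)
    (hℓpos : ∀ t > (0:ℝ), 0 < ℓ t)
    (hdiff : ∀ t ≥ (0:ℝ), DifferentiableAt ℝ f t)
    (t₀ : ℝ) (ht₀ : 0 ≤ t₀)
    (hmono : MonotoneOn (deriv f) (Ici t₀) ∨ AntitoneOn (deriv f) (Ici t₀))
    (hreg : Tendsto (fun t => f t / (t ^ ρ * ℓ t)) atTop (nhds 1)) :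
    ∀ δ > (0:ℝ), ∃ ε > (0:ℝ),
      (fun t => ⨆ y ∈ Ico (0:ℝ) δ, |f t - f (t - y)|) =O[atTop]
        (fun t : ℝ => t ^ (ρ - ε)) := by
  intro δ hδ
  refine ⟨1/2, by norm_num, ?_⟩
  obtain ⟨K, hKpos, hev⟩ := aux_derivbound f ρ ℓ hℓ hℓpos hdiff t₀ ht₀ hmono hreg
  have hfpos := aux_fpos f ρ ℓ hℓpos hreg
  obtain ⟨T₁, hT₁⟩ := eventually_atTop.mp (hev.and hfpos)
  set T : ℝ := max T₁ 1 with hTdef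
  have hT0 : (0:ℝ) < T := lt_of_lt_of_le one_pos (le_max_right _ _)
  have hTprop : ∀ t ≥ T, (deriv f t ≤ (ρ + 1/4) * (f t / t) ∧ -(K * (f t / t)) ≤ deriv f t)
      ∧ 0 < f t := fun t ht => hT₁ t (le_trans (le_max_left _ _) ht)
  set c' : ℝ := ρ + 1/2 with hc'def
  set e : ℝ := ρ - 1/2 with hedef
  have hb : ∀ t ≥ T, deriv f t ≤ c' * (f t / t) := by
    intro t ht
    have h1 := (hTprop t ht).1.1
    have h2 := (hTprop t ht).2
    have ht0 : (0:ℝ) < t := lt_of_lt_of_le hT0 ht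
    have hq : (0:ℝ) < f t / t := div_pos h2 ht0
    calc deriv f t ≤ (ρ + 1/4) * (f t / t) := h1
      _ ≤ c' * (f t / t) := by
          apply mul_le_mul_of_nonneg_right _ hq.le
          rw [hc'def]; linarith
  have hgron := aux_gronwall f hdiff c' T hT0 hb
  set A : ℝ := f T * T ^ (-c') with hAdef
  have hA0 : 0 < A := mul_pos (hTprop T le_rfl).2 (Real.rpow_pos_of_pos hT0 _)
  set M : ℝ := max (ρ + 1/4) K with hMdef
  have hM0 : 0 < M := lt_of_lt_of_le hKpos (le_max_right _ _)
  -- derivative bound in terms of t^e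
  have hDB : ∀ t ≥ T, |deriv f t| ≤ M * A * t ^ e := by
    intro t ht
    have ht0 : (0:ℝ) < t := lt_of_lt_of_le hT0 ht
    have h2 : (0:ℝ) < f t := (hTprop t ht).2
    have hq : (0:ℝ) < f t / t := div_pos h2 ht0
    have habs : |deriv f t| ≤ M * (f t / t) := by
      rw [abs_le]
      constructor
      · have := (hTprop t ht).1.2
        have : K * (f t / t) ≤ M * (f t / t) :=
          mul_le_mul_of_nonneg_right (le_max_right _ _) hq.le
        linarith [(hTprop t ht).1.2]
      · refine le_trans (hTprop t ht).1.1 ?_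
        exact mul_le_mul_of_nonneg_right (le_max_left _ _) hq.le
    have hft : f t / t ≤ A * t ^ e := by
      have h3 := hgron t ht
      have h4 : t ^ c' = t ^ e * t := by
        rw [hedef, hc'def, show (ρ + 1/2 : ℝ) = (ρ - 1/2) + 1 by ring,
          Real.rpow_add ht0, Real.rpow_one]
      rw [div_le_iff₀ ht0]
      calc f t ≤ A * t ^ c' := h3
        _ = A * t ^ e * t := by rw [h4]; ring
    calc |deriv f t| ≤ M * (f t / t) := habs
      _ ≤ M * (A * t ^ e) := mul_le_mul_of_nonneg_left hft hM0.le
      _ = M * A * t ^ e := by ring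
  -- final
  set C₂ : ℝ := max 1 (2 ^ (-e) : ℝ) with hC₂def
  have hC₂1 : (1:ℝ) ≤ C₂ := le_max_left _ _
  have hC₂0 : (0:ℝ) < C₂ := lt_of_lt_of_le one_pos hC₂1
  rw [isBigO_iff]
  refine ⟨δ * (M * A) * C₂, ?_⟩
  filter_upwards [eventually_ge_atTop (max (T + δ) (2 * δ + 1))] with t ht
  have ht1 : T + δ ≤ t := le_trans (le_max_left _ _) ht
  have ht2 : 2 * δ + 1 ≤ t := le_trans (le_max_right _ _) ht
  have ht0 : (0:ℝ) < t := by linarith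
  have htT : T ≤ t - δ := by linarith
  have hte : (0:ℝ) < t ^ e := Real.rpow_pos_of_pos ht0 _
  have hB0 : (0:ℝ) ≤ δ * (M * A) * (C₂ * t ^ e) := by positivity
  -- pointwise bound
  have hpt : ∀ y ∈ Ico (0:ℝ) δ, |f t - f (t - y)| ≤ δ * (M * A) * (C₂ * t ^ e) := by
    rintro y ⟨hy0, hyδ⟩
    rcases eq_or_lt_of_le hy0 with rfl | hy0'
    · simpa using hB0
    · have hab : t - y < t := by linarith
      have ha0 : (0:ℝ) ≤ t - y := by linarith
      obtain ⟨c, hc, hceq⟩ := aux_mvt f hdiff ha0 hab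
      have hyc : t - (t - y) = y := by ring
      rw [hyc] at hceq
      have hfc : f t - f (t - y) = deriv f c * y := by
        rw [hceq]; field_simp
      have hcT : T ≤ c := le_trans htT (by linarith [hc.1])
      have hc0 : (0:ℝ) < c := lt_of_lt_of_le hT0 hcT
      have hce : c ^ e ≤ C₂ * t ^ e := by
        rcases le_or_gt 0 e with he | he
        · calc c ^ e ≤ t ^ e := Real.rpow_le_rpow hc0.le hc.2.le he
            _ = 1 * t ^ e := (one_mul _).symm
            _ ≤ C₂ * t ^ e := mul_le_mul_of_nonneg_right hC₂1 hte.le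
        · have ht2' : t / 2 ≤ c := by
            have : t / 2 ≤ t - δ := by linarith
            linarith [hc.1]
          have h5 : c ^ e ≤ (t / 2) ^ e :=
            Real.rpow_le_rpow_of_nonpos (by linarith) ht2' he.le
          have h6 : (t / 2 : ℝ) ^ e = t ^ e * (2:ℝ) ^ (-e) := by
            rw [div_eq_mul_inv, Real.mul_rpow ht0.le (by norm_num),
              Real.inv_rpow (by norm_num), ← Real.rpow_neg (by norm_num)]
          calc c ^ e ≤ (t / 2) ^ e := h5
            _ = (2:ℝ) ^ (-e) * t ^ e := by rw [h6]; ring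
            _ ≤ C₂ * t ^ e := mul_le_mul_of_nonneg_right (le_max_right _ _) hte.le
      have hdc : |deriv f c| ≤ M * A * (C₂ * t ^ e) := by
        refine le_trans (hDB c hcT) ?_
        exact mul_le_mul_of_nonneg_left hce (mul_pos hM0 hA0).le
      calc |f t - f (t - y)| = |deriv f c| * |y| := by rw [hfc, abs_mul]
        _ ≤ (M * A * (C₂ * t ^ e)) * δ := by
            apply mul_le_mul hdc _ (abs_nonneg _) (by positivity)
            rw [abs_of_nonneg hy0]; exact hyδ.le
        _ = δ * (M * A) * (C₂ * t ^ e) := by ring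
  have hsup : (⨆ y ∈ Ico (0:ℝ) δ, |f t - f (t - y)|) ≤ δ * (M * A) * (C₂ * t ^ e) := by
    refine Real.iSup_le (fun y => ?_) hB0
    exact Real.iSup_le (fun hy => hpt y hy) hB0
  have hsup0 : (0:ℝ) ≤ ⨆ y ∈ Ico (0:ℝ) δ, |f t - f (t - y)| :=
    Real.iSup_nonneg fun y => Real.iSup_nonneg fun _ => abs_nonneg _
  rw [Real.norm_eq_abs, Real.norm_eq_abs, abs_of_nonneg hsup0,
    abs_of_nonneg (Real.rpow_nonneg ht0.le _)]
  calc (⨆ y ∈ Ico (0:ℝ) δ, |f t - f (t - y)|) ≤ δ * (M * A) * (C₂ * t ^ e) := hsup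
    _ = δ * (M * A) * C₂ * t ^ (ρ - 1/2) := by rw [hedef]; ring
end
end
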